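/- arXiv:2509.11162 — 8 statements merged into one kernel-verified Lean document; each statement's English description precedes it below -/
import Mathlib

section
/- For all real numbers a > 1 and k > 0, the function f(t) = t·(a^{k/t} − 1) is strictly antitone on the positive reals: for all 0 < t₁ < t₂ we have f(t₂) < f(t₁). (Consequently, for fixed bandwidth, the offloading energy consumed by a task strictly decreases as the allowed offloading duration increases.) -/
open Real Set

lemma strictConvexOn_rpow_const {a : ℝ} (ha : 1 < a) :
    StrictConvexOn ℝ Set.univ (fun x : ℝ => a ^ x) := by
  have ha0 : 0 < a := lt_trans one_pos ha
  have hla : 0 < Real.log a := Real.log_pos ha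
  refine ⟨convex_univ, fun x _ y _ hxy p q hp hq hpq => ?_⟩
  have hne : Real.log a * x ≠ Real.log a * y := by
    intro h
    exact hxy (mul_left_cancel₀ hla.ne' h)
  have key := strictConvexOn_exp.2 (mem_univ (Real.log a * x)) (mem_univ (Real.log a * y))
    hne hp hq hpq
  simp only [smul_eq_mul] at key ⊢
  rw [Real.rpow_def_of_pos ha0, Real.rpow_def_of_pos ha0, Real.rpow_def_of_pos ha0]
  calc Real.exp (Real.log a * (p * x + q * y))
      = Real.exp (p * (Real.log a * x) + q * (Real.log a * y)) := by ring_nf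
    _ < p * Real.exp (Real.log a * x) + q * Real.exp (Real.log a * y) := key

/-- For all real numbers `a > 1` and `k > 0`, the function `f t = t * (a ^ (k / t) - 1)`
(with real power) is strictly antitone on the positive reals: for all `0 < t₁ < t₂`,
`f t₂ < f t₁`. -/
theorem offload_energy_strict_antitone (a k : ℝ) (ha : 1 < a) (hk : 0 < k) :
    ∀ t₁ t₂ : ℝ, 0 < t₁ → t₁ < t₂ →
      t₂ * (a ^ (k / t₂) - 1) < t₁ * (a ^ (k / t₁) - 1) := by
  intro t₁ t₂ ht₁ h12
  have ht₂ : 0 < t₂ := ht₁.trans h12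
  set x := k / t₂ with hx
  set y := k / t₁ with hy
  have hx0 : 0 < x := div_pos hk ht₂
  have hy0 : 0 < y := div_pos hk ht₁
  have hxy : x < y := div_lt_div_of_pos_left hk ht₁ h12
  have hsec := (strictConvexOn_rpow_const ha).secant_strict_mono (a := 0)
    (mem_univ 0) (mem_univ x) (mem_univ y) hx0.ne' hy0.ne' hxy
  simp only [Real.rpow_zero, sub_zero] at hsec
  have ht2x : t₂ = k / x := by field_simp [hx]; rw [hx]; field_simp
  have ht1y : t₁ = k / y := by field_simp [hy]; rw [hy]; field_simp
  have key : k * ((a ^ x - 1) / x) < k * ((a ^ y - 1) / y) :=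
    (mul_lt_mul_iff_right₀ hk).2 hsec
  calc t₂ * (a ^ x - 1) = k * ((a ^ x - 1) / x) := by rw [ht2x]; field_simp
    _ < k * ((a ^ y - 1) / y) := key
    _ = t₁ * (a ^ y - 1) := by rw [ht1y]; field_simp
end

section
/- Suppose a task is feasibly offloaded with bandwidth b > 0, computation allocation c > 0, and power p > 0, i.e., its offloading time t₀ = s/(b·b̄·log₂(1 + p·p̄·G/σ²)) satisfies the deadline constraint t₀ + δ + s·η/(c·c̄) ≤ d. Let B ≥ b and C ≥ c be enlarged allocations and set T := d − δ − s·η/(C·c̄). Then: (i) T ≥ t₀ > 0; (ii) the power P := (σ²/(p̄·G))·(2^{s/(T·B·b̄)} − 1) needed to offload within time T using bandwidth B satisfies 0 < P ≤ p; and (iii) the resulting offloading energy satisfies P·p̄·T ≤ p·p̄·t₀, so the saved energy E^l − P·p̄·T is at least E^l − p·p̄·t₀. -/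
lemma aux_expdiv (u v : ℝ) (hu : 0 < u) (huv : u ≤ v) :
    v * (Real.exp u - 1) ≤ u * (Real.exp v - 1) := by
  have h1 : v - u + 1 ≤ Real.exp (v - u) := Real.add_one_le_exp _
  have h2 : -u + 1 ≤ Real.exp (-u) := Real.add_one_le_exp _
  have h3 : Real.exp v = Real.exp u * Real.exp (v - u) := by
    rw [← Real.exp_add]; ring_nf
  have h4 : Real.exp (-u) * Real.exp u = 1 := by
    rw [← Real.exp_add]; simp
  have h5 := Real.exp_pos u
  have h6 := Real.exp_pos (v - u)
  nlinarith [mul_nonneg (sub_nonneg.2 huv) (mul_pos h5 hu).le,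
    mul_le_mul_of_nonneg_left h2 h5.le,
    mul_le_mul_of_nonneg_left h1 (mul_pos h5 hu).le]

/-- Fix positive constants `s` (task size), `η` (cycles per bit), `bu, cu, pu`
(bandwidth/computation/power units), `G` (channel gain), `σ2` (noise power), a deadline
`d > 0`, a backhaul delay `δ ≥ 0` and a local-processing energy `El`.  Suppose a task is
feasibly offloaded with bandwidth `b > 0`, computation allocation `c > 0` and power `p > 0`,
i.e., its offloading time `t₀ = s / (b * bu * log₂(1 + p * pu * G / σ2))` satisfies
`t₀ + δ + s * η / (c * cu) ≤ d`.  Let `B ≥ b` and `C ≥ c` be enlarged allocations and set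
`T := d - δ - s * η / (C * cu)`.  Then (i) `T ≥ t₀ > 0`; (ii) the power
`P := (σ2 / (pu * G)) * (2 ^ (s / (T * B * bu)) - 1)` needed to offload within time `T` using
bandwidth `B` satisfies `0 < P ≤ p`; and (iii) the resulting offloading energy satisfies
`P * pu * T ≤ p * pu * t₀`, hence the saved energy `El - P * pu * T` is at least
`El - p * pu * t₀`. -/
theorem enlarged_allocation_feasible (s η bu cu pu G σ2 d δ El : ℝ)
    (hs : 0 < s) (hη : 0 < η) (hbu : 0 < bu) (hcu : 0 < cu) (hpu : 0 < pu)
    (hG : 0 < G) (hσ2 : 0 < σ2) (hd : 0 < d) (hδ : 0 ≤ δ)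
    (b c p : ℝ) (hb : 0 < b) (hc : 0 < c) (hp : 0 < p)
    (t₀ : ℝ) (ht₀ : t₀ = s / (b * bu * Real.logb 2 (1 + p * pu * G / σ2)))
    (hdeadline : t₀ + δ + s * η / (c * cu) ≤ d)
    (B C : ℝ) (hB : b ≤ B) (hC : c ≤ C)
    (T : ℝ) (hT : T = d - δ - s * η / (C * cu))
    (P : ℝ) (hP : P = (σ2 / (pu * G)) * ((2 : ℝ) ^ (s / (T * B * bu)) - 1)) :
    0 < t₀ ∧ t₀ ≤ T ∧ 0 < P ∧ P ≤ p ∧ P * pu * T ≤ p * pu * t₀ ∧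
      El - p * pu * t₀ ≤ El - P * pu * T := by
  have hratio : 0 < p * pu * G / σ2 := by positivity
  have hL : 0 < Real.logb 2 (1 + p * pu * G / σ2) :=
    Real.logb_pos (by norm_num) (by linarith)
  set L := Real.logb 2 (1 + p * pu * G / σ2) with hLdef
  have ht₀pos : 0 < t₀ := by rw [ht₀]; positivity
  have hCpos : 0 < C := lt_of_lt_of_le hc hC
  have hBpos : 0 < B := lt_of_lt_of_le hb hB
  have hTt : t₀ ≤ T := by
    rw [hT]
    have h1 : s * η / (C * cu) ≤ s * η / (c * cu) := by
      apply div_le_div_of_nonneg_left (by positivity) (by positivity)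
      exact mul_le_mul_of_nonneg_right hC hcu.le
    linarith
  have hTpos : 0 < T := lt_of_lt_of_le ht₀pos hTt
  -- key identity
  have hkey : s / (t₀ * b * bu) = L := by
    rw [ht₀]; field_simp
  have h2L : (2 : ℝ) ^ L = 1 + p * pu * G / σ2 :=
    Real.rpow_logb (by linarith) (by norm_num) (by linarith)
  set e1 := s / (T * B * bu) with he1
  set e2 := s / (T * b * bu) with he2
  have he1pos : 0 < e1 := by rw [he1]; positivity
  have he2pos : 0 < e2 := by rw [he2]; positivity
  have he12 : e1 ≤ e2 := by
    apply div_le_div_of_nonneg_left hs.le (by positivity)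
    have := mul_le_mul_of_nonneg_left hB hTpos.le
    exact mul_le_mul_of_nonneg_right this hbu.le
  have he2L : e2 ≤ L := by
    rw [← hkey]
    apply div_le_div_of_nonneg_left hs.le (by positivity)
    exact mul_le_mul_of_nonneg_right (mul_le_mul_of_nonneg_right hTt hb.le) hbu.le
  have he1L : e1 ≤ L := he12.trans he2L
  have h2e1gt : (1 : ℝ) < (2 : ℝ) ^ e1 :=
    Real.one_lt_rpow_iff_of_pos (by norm_num) |>.2 (Or.inl ⟨by norm_num, he1pos⟩)
  have hPpos : 0 < P := by
    rw [hP]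
    have : 0 < (2 : ℝ) ^ e1 - 1 := by linarith
    positivity
  have h2e1L : (2 : ℝ) ^ e1 ≤ (2 : ℝ) ^ L :=
    Real.rpow_le_rpow_of_exponent_le (by norm_num) he1L
  have hPp : P ≤ p := by
    rw [hP]
    have h1 : (σ2 / (pu * G)) * ((2 : ℝ) ^ e1 - 1)
        ≤ (σ2 / (pu * G)) * ((2 : ℝ) ^ L - 1) := by
      apply mul_le_mul_of_nonneg_left (by linarith) (by positivity)
    have h2 : (σ2 / (pu * G)) * ((2 : ℝ) ^ L - 1) = p := by
      rw [h2L]; field_simp; ring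
    linarith
  -- energy inequality
  have hln2 : (0 : ℝ) < Real.log 2 := Real.log_pos (by norm_num)
  have hexp : ∀ x : ℝ, (2 : ℝ) ^ x = Real.exp (x * Real.log 2) := by
    intro x
    rw [Real.rpow_def_of_pos (by norm_num)]; ring_nf
  have haux := aux_expdiv (e2 * Real.log 2) (L * Real.log 2)
    (by positivity) (mul_le_mul_of_nonneg_right he2L hln2.le)
  rw [← hexp e2, ← hexp L] at haux
  -- from haux : L ln2 (2^e2 - 1) ≤ e2 ln2 (2^L - 1), divide by ln2
  have hmono : L * ((2 : ℝ) ^ e2 - 1) ≤ e2 * ((2 : ℝ) ^ L - 1) := by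
    nlinarith [haux]
  -- T = s / (e2 * b * bu), t₀ = s / (L * b * bu)
  have hTe2 : T * e2 = s / (b * bu) := by
    rw [he2]; field_simp
  have ht₀L : t₀ * L = s / (b * bu) := by
    rw [← hkey]; field_simp
  have hstep : ((2 : ℝ) ^ e2 - 1) * T ≤ ((2 : ℝ) ^ L - 1) * t₀ := by
    have h1 : ((2 : ℝ) ^ e2 - 1) * T * (e2 * L) = L * ((2 : ℝ) ^ e2 - 1) * (T * e2) := by ring
    have h2 : ((2 : ℝ) ^ L - 1) * t₀ * (e2 * L) = e2 * ((2 : ℝ) ^ L - 1) * (t₀ * L) := by ring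
    have hsb : 0 < s / (b * bu) := by positivity
    have key : ((2 : ℝ) ^ e2 - 1) * T * (e2 * L) ≤ ((2 : ℝ) ^ L - 1) * t₀ * (e2 * L) := by
      rw [h1, h2, hTe2, ht₀L]
      exact mul_le_mul_of_nonneg_right hmono hsb.le
    have heL : 0 < e2 * L := by positivity
    exact le_of_mul_le_mul_right key heL
  have hstep0 : ((2 : ℝ) ^ e1 - 1) * T ≤ ((2 : ℝ) ^ e2 - 1) * T := by
    have : (2 : ℝ) ^ e1 ≤ (2 : ℝ) ^ e2 :=
      Real.rpow_le_rpow_of_exponent_le (by norm_num) he12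
    exact mul_le_mul_of_nonneg_right (sub_le_sub_right this 1) hTpos.le
  have henergy : P * pu * T ≤ p * pu * t₀ := by
    have hPform : P * pu * T = (σ2 / G) * (((2 : ℝ) ^ e1 - 1) * T) := by
      rw [hP]; field_simp
    have hpform : p * pu * t₀ = (σ2 / G) * (((2 : ℝ) ^ L - 1) * t₀) := by
      have : (2 : ℝ) ^ L - 1 = p * pu * G / σ2 := by rw [h2L]; ring
      rw [this]; field_simp
    rw [hPform, hpform]
    apply mul_le_mul_of_nonneg_left (hstep0.trans hstep) (by positivity)
  exact ⟨ht₀pos, hTt, hPpos, hPp, henergy, by linarith⟩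
end

section
/- Let φ > 1 be a real number and N ≥ 1 an integer. Set π = ⌈log_φ N⌉ and define B_m = ⌊φ^m⌋ for 0 ≤ m ≤ π − 1 and B_π = N. Then for every integer x with 1 ≤ x ≤ N there exists m with 0 ≤ m ≤ π such that x ≤ B_m and B_m < φ·x. -/
/-- Let `φ > 1` be real and `N ≥ 1` an integer.  Set `π = ⌈log_φ N⌉` and define the
discretized levels `B m = ⌊φ ^ m⌋` for `0 ≤ m ≤ π - 1` and `B π = N`.  Then every integer
`x` with `1 ≤ x ≤ N` can be rounded up to some level: there exists `m` with `0 ≤ m ≤ π`,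
`x ≤ B m` and `B m < φ * x`. -/
theorem discretization_roundup (φ : ℝ) (hφ : 1 < φ) (N : ℤ) (hN : 1 ≤ N)
    (π : ℤ) (hπ : π = ⌈Real.logb φ (N : ℝ)⌉)
    (B : ℤ → ℤ)
    (hB : ∀ m : ℤ, 0 ≤ m → m < π → B m = ⌊φ ^ m⌋)
    (hBπ : B π = N) :
    ∀ x : ℤ, 1 ≤ x → x ≤ N →
      ∃ m : ℤ, 0 ≤ m ∧ m ≤ π ∧ x ≤ B m ∧ (B m : ℝ) < φ * (x : ℝ) := by
  intro x hx1 hxN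
  have hφ0 : (0:ℝ) < φ := lt_trans zero_lt_one hφ
  have hφ1 : φ ≠ 1 := ne_of_gt hφ
  have hxR : (1:ℝ) ≤ (x:ℝ) := by exact_mod_cast hx1
  have hx0 : (0:ℝ) < (x:ℝ) := lt_of_lt_of_le zero_lt_one hxR
  set L := Real.logb φ (x:ℝ) with hL
  have hL0 : 0 ≤ L := Real.logb_nonneg hφ hxR
  set m := ⌈L⌉ with hm
  have hm0 : 0 ≤ m := Int.ceil_nonneg hL0
  have hmπ : m ≤ π := by
    rw [hπ]
    exact Int.ceil_le_ceil (Real.logb_le_logb_of_le hφ hx0 (by exact_mod_cast hxN))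
  -- φ ^ m < φ * x
  have hlt : φ ^ (m:ℝ) < φ * (x:ℝ) := by
    have h1 : (m:ℝ) < L + 1 := by exact_mod_cast Int.ceil_lt_add_one L
    have h2 : φ ^ (m:ℝ) < φ ^ (L + 1) := Real.rpow_lt_rpow_of_exponent_lt hφ h1
    calc φ ^ (m:ℝ) < φ ^ (L + 1) := h2
      _ = φ ^ L * φ := by rw [Real.rpow_add hφ0, Real.rpow_one]
      _ = φ * (x:ℝ) := by rw [Real.rpow_logb hφ0 hφ1 hx0]; ring
  have hle : (x:ℝ) ≤ φ ^ (m:ℝ) := by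
    calc (x:ℝ) = φ ^ L := (Real.rpow_logb hφ0 hφ1 hx0).symm
      _ ≤ φ ^ (m:ℝ) := Real.rpow_le_rpow_of_exponent_le hφ.le (Int.le_ceil L)
  have hrz : φ ^ (m:ℝ) = φ ^ m := Real.rpow_intCast φ m
  rcases eq_or_lt_of_le hmπ with heq | hltπ
  · refine ⟨π, le_trans hm0 hmπ, le_refl π, by rw [hBπ]; exact hxN, ?_⟩
    rw [hBπ]
    have hNle : (N:ℝ) ≤ φ ^ (π:ℝ) := by
      have h1 : Real.logb φ (N:ℝ) ≤ (π:ℝ) := by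
        rw [hπ]; exact_mod_cast Int.le_ceil _
      calc (N:ℝ) = φ ^ Real.logb φ (N:ℝ) :=
            (Real.rpow_logb hφ0 hφ1 (by exact_mod_cast lt_of_lt_of_le zero_lt_one hN)).symm
        _ ≤ φ ^ (π:ℝ) := Real.rpow_le_rpow_of_exponent_le hφ.le h1
    calc (N:ℝ) ≤ φ ^ (π:ℝ) := hNle
      _ = φ ^ (m:ℝ) := by rw [heq]
      _ < φ * (x:ℝ) := hlt
  · refine ⟨m, hm0, hmπ, ?_, ?_⟩
    · rw [hB m hm0 hltπ]
      exact Int.le_floor.mpr (by rw [← hrz]; exact hle)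
    · rw [hB m hm0 hltπ]
      calc ((⌊φ ^ m⌋ : ℤ) : ℝ) ≤ φ ^ m := Int.floor_le _
        _ = φ ^ (m:ℝ) := hrz.symm
        _ < φ * (x:ℝ) := hlt
end

section
/- For every bucket-respecting selection c, the total selected value satisfies Σ_{r=1}^{n} a(c(r)) ≤ a(1) + Σ_{s=1}^{N} f(s)·a(s). That is, picking one item per unit bucket from the greedy ordering costs at most the total fractional value plus the single largest value. -/
noncomputable def gclip (x : ℝ) (j : ℕ) : ℝ := min (max (x - ((j : ℝ) - 1)) 0) 1

lemma gclip_nonneg (x : ℝ) (j : ℕ) : 0 ≤ gclip x j :=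
  le_min (le_max_right _ _) zero_le_one

lemma gclip_le_one (x : ℝ) (j : ℕ) : gclip x j ≤ 1 := min_le_right _ _

lemma gclip_mono {x y : ℝ} (j : ℕ) (h : x ≤ y) : gclip x j ≤ gclip y j := by
  unfold gclip
  exact min_le_min (max_le_max (by linarith) le_rfl) le_rfl

lemma gclip_eq_one {x : ℝ} {j : ℕ} (h : (j : ℝ) ≤ x) : gclip x j = 1 := by
  unfold gclip
  rw [min_eq_right]
  apply le_max_of_le_left; linarith

lemma gclip_eq_zero {x : ℝ} {j : ℕ} (h : x ≤ (j : ℝ) - 1) : gclip x j = 0 := by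
  unfold gclip
  rw [max_eq_right (by linarith)]
  exact min_eq_left zero_le_one

lemma gclip_sum (x : ℝ) (hx : 0 ≤ x) (m : ℕ) :
    ∑ j ∈ Finset.Icc 1 m, gclip x j = min x (m : ℝ) := by
  induction m with
  | zero => simp [min_eq_right hx]
  | succ m ih =>
    rw [Finset.sum_Icc_succ_top (Nat.le_add_left 1 m), ih]
    unfold gclip
    push_cast
    rcases le_total x (m : ℝ) with h | h <;> rcases le_total x ((m : ℝ) + 1) with h' | h' <;>
      simp [min_def, max_def] <;> split_ifs <;> linarith

/-- Let `N ≥ 1`, `a : {1,…,N} → ℝ` a nonincreasing sequence of nonnegative values and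
`f : {1,…,N} → ℝ` fractions in `[0,1]`.  With prefix sums `F s = f 1 + ⋯ + f s` (so
`F 0 = 0`), `F N > 0`, and `n = ⌈F N⌉`, any bucket-respecting selection
`c : {1,…,n} → {1,…,N}` (i.e. `F (c r - 1) < r` and `F (c r) > r - 1` for each bucket `r`)
satisfies `Σ_{r=1}^{n} a (c r) ≤ a 1 + Σ_{s=1}^{N} f s * a s`. -/
theorem bucket_selection_bound (N : ℕ) (hN : 1 ≤ N) (a f : ℕ → ℝ)
    (ha_anti : ∀ s : ℕ, 1 ≤ s → s < N → a (s + 1) ≤ a s)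
    (ha_nonneg : ∀ s : ℕ, 1 ≤ s → s ≤ N → 0 ≤ a s)
    (hf_nonneg : ∀ s : ℕ, 1 ≤ s → s ≤ N → 0 ≤ f s)
    (hf_le_one : ∀ s : ℕ, 1 ≤ s → s ≤ N → f s ≤ 1)
    (F : ℕ → ℝ) (hF : ∀ s : ℕ, F s = ∑ t ∈ Finset.Icc 1 s, f t)
    (hFN : 0 < F N)
    (n : ℕ) (hn : n = ⌈F N⌉₊)
    (c : ℕ → ℕ)
    (hc : ∀ r : ℕ, 1 ≤ r → r ≤ n →
      1 ≤ c r ∧ c r ≤ N ∧ F (c r - 1) < (r : ℝ) ∧ (r : ℝ) - 1 < F (c r)) :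
    ∑ r ∈ Finset.Icc 1 n, a (c r) ≤ a 1 + ∑ s ∈ Finset.Icc 1 N, f s * a s := by
  -- basic facts
  have hn1 : 1 ≤ n := by
    rw [hn]; exact Nat.one_le_ceil_iff.mpr hFN
  have hF0 : F 0 = 0 := by rw [hF]; simp
  have hFmono : ∀ s t : ℕ, s ≤ t → t ≤ N → F s ≤ F t := by
    intro s t hst htN
    rw [hF, hF]
    apply Finset.sum_le_sum_of_subset_of_nonneg (Finset.Icc_subset_Icc_right hst)
    intro i hi _
    exact hf_nonneg i (Finset.mem_Icc.mp hi).1 (le_trans (Finset.mem_Icc.mp hi).2 htN)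
  have hFnonneg : ∀ s : ℕ, s ≤ N → 0 ≤ F s := by
    intro s hsN
    calc (0:ℝ) = F 0 := hF0.symm
    _ ≤ F s := hFmono 0 s (Nat.zero_le _) hsN
  have hFdiff : ∀ s : ℕ, 1 ≤ s → F s = F (s - 1) + f s := by
    intro s hs
    have hs' : s - 1 + 1 = s := Nat.succ_pred_eq_of_pos hs
    rw [hF, hF, ← hs', Finset.sum_Icc_succ_top (Nat.le_add_left 1 (s-1))]
    simp
  have hanti : ∀ s t : ℕ, 1 ≤ s → s ≤ t → t ≤ N → a t ≤ a s := by
    intro s t hs hst htN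
    induction t with
    | zero => omega
    | succ t ih =>
      rcases Nat.eq_or_lt_of_le hst with h | h
      · rw [h]
      · have ht1 : 1 ≤ t := by omega
        calc a (t+1) ≤ a t := ha_anti t ht1 (by omega)
        _ ≤ a s := ih (by omega) (by omega)
  have hnF : ((n : ℝ) - 1) < F N := by
    have : (n - 1 : ℕ) < ⌈F N⌉₊ := by omega
    have := Nat.lt_ceil.mp this
    push_cast [Nat.cast_sub hn1] at this ⊢
    linarith
  -- the per-item weight in bucket j
  set w : ℕ → ℕ → ℝ := fun s j => gclip (F s) j - gclip (F (s-1)) j with hw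
  have hw_nonneg : ∀ s j, 1 ≤ s → s ≤ N → 0 ≤ w s j := by
    intro s j hs hsN
    have : F (s-1) ≤ F s := hFmono (s-1) s (Nat.sub_le _ _) hsN
    simpa [hw] using sub_nonneg.mpr (gclip_mono j this)
  -- buckets 1..n-1 sum to one over items
  have hsum_one : ∀ j : ℕ, 1 ≤ j → j ≤ n - 1 → ∑ s ∈ Finset.Icc 1 N, w s j = 1 := by
    intro j hj hjn
    have htele : ∑ s ∈ Finset.Icc 1 N, w s j = gclip (F N) j - gclip (F 0) j := by
      rw [← Finset.Ico_add_one_right_eq_Icc, Finset.sum_Ico_eq_sum_range]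
      simp only [hw]
      have : ∀ i ∈ Finset.range (N + 1 - 1), gclip (F (1+i)) j - gclip (F (1+i-1)) j
          = gclip (F (i+1)) j - gclip (F i) j := by
        intro i _
        have e2 : 1+i-1 = i := by omega
        have e1 : 1+i = i+1 := by omega
        rw [e2, e1]

      rw [Finset.sum_congr rfl this]
      simpa using Finset.sum_range_sub (fun i => gclip (F i) j) N
    have hj1 : (1:ℝ) ≤ (j:ℝ) := by exact_mod_cast hj
    have hcast : (j : ℝ) ≤ (n : ℝ) - 1 := by
      have : (j : ℝ) ≤ ((n - 1 : ℕ) : ℝ) := by exact_mod_cast hjn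
      rw [Nat.cast_sub hn1] at this; simpa using this
    have hz : gclip (F 0) j = 0 := by rw [hF0]; exact gclip_eq_zero (by linarith)
    have ho : gclip (F N) j = 1 := gclip_eq_one (by linarith)
    rw [htele, hz, ho, sub_zero]
  -- key per-bucket bound for r ≥ 2
  have hbucket : ∀ r : ℕ, 2 ≤ r → r ≤ n →
      a (c r) ≤ ∑ s ∈ Finset.Icc 1 N, w s (r-1) * a s := by
    intro r hr2 hrn
    obtain ⟨hcr1, hcrN, hclo, hchi⟩ := hc r (by omega) hrn
    have hr1cast : ((r - 1 : ℕ) : ℝ) = (r : ℝ) - 1 := by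
      rw [Nat.cast_sub (by omega)]; simp
    have hone : ∑ s ∈ Finset.Icc 1 N, w s (r-1) = 1 := hsum_one (r-1) (by omega) (by omega)
    calc a (c r) = ∑ s ∈ Finset.Icc 1 N, w s (r-1) * a (c r) := by
          rw [← Finset.sum_mul, hone, one_mul]
    _ ≤ ∑ s ∈ Finset.Icc 1 N, w s (r-1) * a s := by
        apply Finset.sum_le_sum
        intro s hs
        obtain ⟨hs1, hsN⟩ := Finset.mem_Icc.mp hs
        rcases eq_or_lt_of_le (hw_nonneg s (r-1) hs1 hsN) with h0 | hpos
        · rw [← h0]; simp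
        · apply mul_le_mul_of_nonneg_left _ (le_of_lt hpos)
          -- positivity of weight forces F (s-1) < r-1 and r-2 < F s, so s ≤ c r
          have hFs1 : F (s - 1) < (r : ℝ) - 1 := by
            by_contra h
            push_neg at h
            have : gclip (F (s-1)) (r-1) = 1 := gclip_eq_one (by rw [hr1cast]; exact h)
            have := gclip_le_one (F s) (r-1)
            simp only [hw] at hpos
            linarith
          have hscr : s ≤ c r := by
            by_contra h
            push_neg at h
            have : F (c r) ≤ F (s - 1) := hFmono (c r) (s-1) (by omega) (by omega)
            linarith
          exact hanti s (c r) hs1 hscr hcrN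
  -- split off the first bucket
  have hsplit : ∑ r ∈ Finset.Icc 1 n, a (c r) = a (c 1) + ∑ r ∈ Finset.Icc 2 n, a (c r) := by
    have : Finset.Icc 1 n = insert 1 (Finset.Icc 2 n) := by
      ext x; simp [Finset.mem_Icc]; omega
    rw [this, Finset.sum_insert (by simp)]
  have hc1 : a (c 1) ≤ a 1 := by
    obtain ⟨h1, h2, _, _⟩ := hc 1 le_rfl hn1
    exact hanti 1 (c 1) le_rfl h1 h2
  rw [hsplit]
  have hmain : ∑ r ∈ Finset.Icc 2 n, a (c r) ≤ ∑ s ∈ Finset.Icc 1 N, f s * a s := by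
    calc ∑ r ∈ Finset.Icc 2 n, a (c r)
        ≤ ∑ r ∈ Finset.Icc 2 n, ∑ s ∈ Finset.Icc 1 N, w s (r-1) * a s :=
          Finset.sum_le_sum fun r hr => hbucket r (Finset.mem_Icc.mp hr).1 (Finset.mem_Icc.mp hr).2
    _ = ∑ s ∈ Finset.Icc 1 N, (∑ j ∈ Finset.Icc 1 (n-1), w s j) * a s := by
          rw [Finset.sum_comm]
          apply Finset.sum_congr rfl
          intro s _
          rw [Finset.sum_mul]
          rw [← Finset.Ico_add_one_right_eq_Icc, Finset.sum_Ico_eq_sum_range,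
            ← Finset.Ico_add_one_right_eq_Icc, Finset.sum_Ico_eq_sum_range]
          apply Finset.sum_congr (by congr 1 <;> omega)
          intro i _
          have e : 2+i-1 = 1+i := by omega
          rw [e]
    _ ≤ ∑ s ∈ Finset.Icc 1 N, f s * a s := by
          apply Finset.sum_le_sum
          intro s hs
          obtain ⟨hs1, hsN⟩ := Finset.mem_Icc.mp hs
          apply mul_le_mul_of_nonneg_right _ (ha_nonneg s hs1 hsN)
          have hsn : 0 ≤ F (s-1) := hFnonneg _ (by omega)
          have heq : ∑ j ∈ Finset.Icc 1 (n-1), w s j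
              = min (F s) ((n-1 : ℕ) : ℝ) - min (F (s-1)) ((n-1 : ℕ) : ℝ) := by
            simp only [hw]
            rw [Finset.sum_sub_distrib, gclip_sum _ (hFnonneg s hsN), gclip_sum _ hsn]
          rw [heq]
          have hfs : F s - F (s - 1) = f s := by rw [hFdiff s hs1]; ring
          have hs' : F (s-1) ≤ F s := hFmono (s-1) s (Nat.sub_le _ _) hsN
          simp only [min_def]
          split_ifs <;> linarith
  linarith
end

section
/- Suppose additionally that there is a capacity β > 0 and a bound α with 0 ≤ α < 1 such that a(s) ≤ α·β for every item s and Σ_{s=1}^{N} f(s)·a(s) ≤ (1−α)·β. Then every bucket-respecting selection c satisfies Σ_{r=1}^{n} a(c(r)) ≤ β. That is, if each single allocation is capped at an α-fraction of the capacity and the fractional LP solution uses at most a (1−α)-fraction of the capacity, then the rounded integral selection never exceeds the capacity. -/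
/-- Clamp identity: `max j (min (j+1) z) = (min z (j+1) - min z j) + j` for `z ≥ 0`, `j ≥ 0`. -/
lemma bsc_clamp (j z : ℝ) (hz : 0 ≤ z) (hj : 0 ≤ j) :
    max j (min (j + 1) z) = (min z (j + 1) - min z j) + j := by
  rcases le_total z j with h | h <;> rcases le_total z (j + 1) with h' | h' <;>
    simp only [min_def, max_def] <;> split_ifs <;> linarith

/-- `min` with a common cap is 1-Lipschitz. -/
lemma bsc_min_sub (x y m : ℝ) (h : y ≤ x) : min x m - min y m ≤ x - y := by
  rcases le_total x m with h' | h' <;> rcases le_total y m with h'' | h'' <;>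
    simp only [min_def] <;> split_ifs <;> linarith

/-- Same setup as the bucket-selection bound: `N ≥ 1`, `a` nonincreasing and nonnegative on
`{1,…,N}`, fractions `f` in `[0,1]`, prefix sums `F`, `F N > 0`, `n = ⌈F N⌉`, and a
bucket-respecting selection `c`.  Suppose additionally there is a capacity `β > 0` and a
bound `α` with `0 ≤ α < 1` such that `a s ≤ α * β` for every item `s` and
`Σ_{s=1}^{N} f s * a s ≤ (1 - α) * β`.  Then `Σ_{r=1}^{n} a (c r) ≤ β`. -/
theorem bucket_selection_capacity (N : ℕ) (hN : 1 ≤ N) (a f : ℕ → ℝ)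
    (ha_anti : ∀ s : ℕ, 1 ≤ s → s < N → a (s + 1) ≤ a s)
    (ha_nonneg : ∀ s : ℕ, 1 ≤ s → s ≤ N → 0 ≤ a s)
    (hf_nonneg : ∀ s : ℕ, 1 ≤ s → s ≤ N → 0 ≤ f s)
    (hf_le_one : ∀ s : ℕ, 1 ≤ s → s ≤ N → f s ≤ 1)
    (F : ℕ → ℝ) (hF : ∀ s : ℕ, F s = ∑ t ∈ Finset.Icc 1 s, f t)
    (hFN : 0 < F N)
    (n : ℕ) (hn : n = ⌈F N⌉₊)
    (c : ℕ → ℕ)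
    (hc : ∀ r : ℕ, 1 ≤ r → r ≤ n →
      1 ≤ c r ∧ c r ≤ N ∧ F (c r - 1) < (r : ℝ) ∧ (r : ℝ) - 1 < F (c r))
    (β α : ℝ) (hβ : 0 < β) (hα0 : 0 ≤ α) (hα1 : α < 1)
    (ha_cap : ∀ s : ℕ, 1 ≤ s → s ≤ N → a s ≤ α * β)
    (hfa_cap : ∑ s ∈ Finset.Icc 1 N, f s * a s ≤ (1 - α) * β) :
    ∑ r ∈ Finset.Icc 1 n, a (c r) ≤ β := by
  classical
  -- the clamp function
  set μ : ℝ → ℝ → ℝ := fun k z => max (k - 1) (min k z) with hμdef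
  have hF0 : F 0 = 0 := by rw [hF]; simp
  have hmono : ∀ s t : ℕ, s ≤ t → t ≤ N → F s ≤ F t := by
    intro s t hst htN
    rw [hF, hF]
    refine Finset.sum_le_sum_of_subset_of_nonneg (Finset.Icc_subset_Icc_right hst) ?_
    intro i hi _
    exact hf_nonneg i (Finset.mem_Icc.mp hi).1 (le_trans (Finset.mem_Icc.mp hi).2 htN)
  have hFnn : ∀ s : ℕ, s ≤ N → 0 ≤ F s := fun s hs => hF0 ▸ hmono 0 s (Nat.zero_le s) hs
  have hstep : ∀ s : ℕ, 1 ≤ s → F s = F (s - 1) + f s := by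
    intro s hs
    rcases s with _ | t
    · omega
    · simp only [Nat.succ_sub_one]
      rw [hF, hF, Finset.sum_Icc_succ_top (by omega : 1 ≤ t + 1)]
  have hanti : ∀ s t : ℕ, 1 ≤ s → s ≤ t → t ≤ N → a t ≤ a s := by
    intro s t hs
    induction t with
    | zero => intro h1 h2; omega
    | succ u ih =>
      intro h1 h2
      rcases Nat.lt_or_ge s (u + 1) with h | h
      · exact le_trans (ha_anti u (by omega) (by omega)) (ih (by omega) (by omega))
      · have : s = u + 1 := by omega
        rw [this]
  have hn1 : 1 ≤ n := by rw [hn]; exact Nat.one_le_ceil_iff.mpr hFN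
  have hnF : (n : ℝ) - 1 < F N := by
    have h : (n - 1 : ℕ) < ⌈F N⌉₊ := by omega
    have h2 := Nat.lt_ceil.mp h
    have h3 : ((n - 1 : ℕ) : ℝ) = (n : ℝ) - 1 := by
      push_cast [Nat.cast_sub hn1]; ring
    linarith [h3 ▸ h2]
  -- key bound for buckets r ≥ 2
  have key : ∀ r : ℕ, 2 ≤ r → r ≤ n →
      a (c r) ≤ ∑ s ∈ Finset.Icc 1 N,
        (μ ((r : ℝ) - 1) (F s) - μ ((r : ℝ) - 1) (F (s - 1))) * a s := by
    intro r hr2 hrn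
    obtain ⟨hc1, hcN, _, hcF⟩ := hc r (by omega) hrn
    set k : ℝ := (r : ℝ) - 1 with hk
    have hr2' : (2 : ℝ) ≤ (r : ℝ) := by exact_mod_cast hr2
    have hk1 : 1 ≤ k := by rw [hk]; linarith
    have hkFN : k ≤ F N := by
      have h1 : (r : ℝ) ≤ (n : ℝ) := by exact_mod_cast hrn
      rw [hk]; linarith
    have htel : ∑ s ∈ Finset.Icc 1 N, (μ k (F s) - μ k (F (s - 1))) = 1 := by
      rw [← Finset.Ico_add_one_right_eq_Icc, Finset.sum_Ico_eq_sum_range]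
      have hNr : N + 1 - 1 = N := by omega
      rw [hNr]
      have heq : ∀ i ∈ Finset.range N,
          μ k (F (1 + i)) - μ k (F (1 + i - 1))
            = (fun j => μ k (F j)) (i + 1) - (fun j => μ k (F j)) i := by
        intro i _
        simp only
        rw [show 1 + i = i + 1 from by omega, show i + 1 - 1 = i from by omega]
      rw [Finset.sum_congr rfl heq, Finset.sum_range_sub (fun j => μ k (F j)) N]
      have h1 : μ k (F N) = k := by
        rw [hμdef]; simp only
        rw [min_eq_left hkFN, max_eq_right (by linarith)]
      have h2 : μ k (F 0) = k - 1 := by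
        rw [hμdef, hF0]; simp only
        rw [min_eq_right (by linarith), max_eq_left (by linarith)]
      rw [h1, h2]; ring
    have hμmono : ∀ x y : ℝ, x ≤ y → μ k x ≤ μ k y := by
      intro x y h
      exact max_le_max le_rfl (min_le_min le_rfl h)
    calc a (c r) = ∑ s ∈ Finset.Icc 1 N, (μ k (F s) - μ k (F (s - 1))) * a (c r) := by
          rw [← Finset.sum_mul, htel, one_mul]
      _ ≤ ∑ s ∈ Finset.Icc 1 N, (μ k (F s) - μ k (F (s - 1))) * a s := by
          refine Finset.sum_le_sum ?_
          intro s hs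
          obtain ⟨hs1, hsN⟩ := Finset.mem_Icc.mp hs
          have hnn : 0 ≤ μ k (F s) - μ k (F (s - 1)) := by
            have := hμmono (F (s - 1)) (F s) (hmono (s - 1) s (by omega) hsN)
            linarith
          rcases eq_or_lt_of_le hnn with h0 | hpos
          · rw [← h0]; simp
          · have hFs1 : F (s - 1) < k := by
              by_contra hge
              push_neg at hge
              have h1 : μ k (F (s - 1)) = k := by
                rw [hμdef]; simp only
                rw [min_eq_left hge, max_eq_right (by linarith)]
              have h2 : μ k (F s) ≤ k := max_le (by linarith) (min_le_left _ _)
              linarith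
            have hscr : s ≤ c r := by
              by_contra hlt
              push_neg at hlt
              have hle : F (c r) ≤ F (s - 1) := hmono (c r) (s - 1) (by omega) (by omega)
              rw [hk] at hFs1
              linarith
            exact mul_le_mul_of_nonneg_left (hanti s (c r) hs1 hscr hcN) hnn
  -- total mass of item s over buckets 2..n is at most f s
  have hcolsum : ∀ s : ℕ, 1 ≤ s → s ≤ N →
      ∑ r ∈ Finset.Icc 2 n, (μ ((r : ℝ) - 1) (F s) - μ ((r : ℝ) - 1) (F (s - 1))) ≤ f s := by
    intro s hs1 hsN
    have hx : 0 ≤ F s := hFnn s hsN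
    have hy : 0 ≤ F (s - 1) := hFnn (s - 1) (by omega)
    have hxy : F (s - 1) ≤ F s := hmono (s - 1) s (by omega) hsN
    rw [← Finset.Ico_add_one_right_eq_Icc, Finset.sum_Ico_eq_sum_range]
    set x := F s
    set y := F (s - 1)
    have hterm : ∀ i ∈ Finset.range (n + 1 - 2),
        μ (((2 + i : ℕ) : ℝ) - 1) x - μ (((2 + i : ℕ) : ℝ) - 1) y
          = ((fun j : ℕ => min x (j : ℝ) - min y (j : ℝ)) (i + 1)
              - (fun j : ℕ => min x (j : ℝ) - min y (j : ℝ)) i) := by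
      intro i _
      have hcast : ((2 + i : ℕ) : ℝ) - 1 = (i : ℝ) + 1 := by push_cast; ring
      rw [hcast, hμdef]
      simp only
      have hm1 : (i : ℝ) + 1 - 1 = (i : ℝ) := by ring
      rw [hm1]
      have e1 := bsc_clamp (i : ℝ) x hx (Nat.cast_nonneg i)
      have e2 := bsc_clamp (i : ℝ) y hy (Nat.cast_nonneg i)
      push_cast
      linarith
    rw [Finset.sum_congr rfl hterm,
      Finset.sum_range_sub (fun j : ℕ => min x (j : ℝ) - min y (j : ℝ)) (n + 1 - 2)]
    simp only [Nat.cast_zero]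
    rw [min_eq_right hx, min_eq_right hy]
    have hfs : f s = x - y := by have := hstep s hs1; linarith
    rw [hfs]
    have := bsc_min_sub x y ((n + 1 - 2 : ℕ) : ℝ) hxy
    linarith
  -- assemble
  have hsplit : Finset.Icc 1 n = insert 1 (Finset.Icc 2 n) := by
    ext x; simp only [Finset.mem_Icc, Finset.mem_insert]; omega
  rw [hsplit, Finset.sum_insert (by simp)]
  have h1 : a (c 1) ≤ α * β := by
    obtain ⟨h11, h1N, _, _⟩ := hc 1 le_rfl hn1
    exact ha_cap _ h11 h1N
  have h2 : ∑ r ∈ Finset.Icc 2 n, a (c r) ≤ ∑ s ∈ Finset.Icc 1 N, f s * a s := by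
    calc ∑ r ∈ Finset.Icc 2 n, a (c r)
        ≤ ∑ r ∈ Finset.Icc 2 n, ∑ s ∈ Finset.Icc 1 N,
            (μ ((r : ℝ) - 1) (F s) - μ ((r : ℝ) - 1) (F (s - 1))) * a s := by
          refine Finset.sum_le_sum ?_
          intro r hr
          obtain ⟨hr2, hrn⟩ := Finset.mem_Icc.mp hr
          exact key r hr2 hrn
      _ = ∑ s ∈ Finset.Icc 1 N, (∑ r ∈ Finset.Icc 2 n,
            (μ ((r : ℝ) - 1) (F s) - μ ((r : ℝ) - 1) (F (s - 1)))) * a s := by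
          rw [Finset.sum_comm]
          refine Finset.sum_congr rfl ?_
          intro s _
          rw [Finset.sum_mul]
      _ ≤ ∑ s ∈ Finset.Icc 1 N, f s * a s := by
          refine Finset.sum_le_sum ?_
          intro s hs
          obtain ⟨hs1, hsN⟩ := Finset.mem_Icc.mp hs
          exact mul_le_mul_of_nonneg_right (hcolsum s hs1 hsN) (ha_nonneg s hs1 hsN)
  linarith
end

section
/- There exists a fragment assignment g : {1,…,N} × {1,…,n} → ℝ such that: (i) g(s,r) ≥ 0 for all s, r; (ii) Σ_{r=1}^{n} g(s,r) = f(s) for every item s; (iii) Σ_{s=1}^{N} g(s,r) ≤ 1 for every bucket r, with equality for every r ≤ n − 1; (iv) each item s has g(s,r) > 0 for at most two values of r, and these are consecutive; and (v) the assignment respects the item order: if s < s', g(s,r) > 0 and g(s',r') > 0, then r ≤ r'. (This is the correctness of the greedy bucket construction that splits the sorted fractional mass into n unit-capacity buckets, creating at most two fragments per item.) -/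
private lemma sum_clamp_aux (m : ℕ) (y : ℝ) (h0 : 0 ≤ y) (hm : y ≤ m) :
    ∑ r ∈ Finset.Icc 1 m, max ((r:ℝ)-1) (min (r:ℝ) y)
      = y + ∑ r ∈ Finset.Icc 1 m, ((r:ℝ)-1) := by
  induction m with
  | zero =>
      simp only [Nat.cast_zero] at hm
      have : y = 0 := le_antisymm hm h0
      simp [this]
  | succ k ih =>
      rw [Finset.sum_Icc_succ_top (by omega : 1 ≤ k + 1),
          Finset.sum_Icc_succ_top (by omega : 1 ≤ k + 1)]
      by_cases hy : y ≤ k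
      · rw [ih hy]
        have h1 : min (((k+1:ℕ):ℝ)) y ≤ (((k+1:ℕ):ℝ)) - 1 := by
          push_cast; refine le_trans (min_le_right _ _) (by linarith)
        rw [max_eq_left h1]; ring
      · push_neg at hy
        have h1 : ∑ r ∈ Finset.Icc 1 k, max ((r:ℝ)-1) (min (r:ℝ) y)
            = ∑ r ∈ Finset.Icc 1 k, (r:ℝ) := by
          refine Finset.sum_congr rfl fun r hr => ?_
          have hrk : (r:ℝ) ≤ k := by
            exact_mod_cast (Finset.mem_Icc.mp hr).2
          rw [min_eq_left (le_of_lt (lt_of_le_of_lt hrk hy)), max_eq_right (by linarith)]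
        have h2 : max ((((k+1:ℕ)):ℝ) - 1) (min (((k+1:ℕ)):ℝ) y) = y := by
          push_cast at hm ⊢
          rw [min_eq_right hm, max_eq_right (by linarith)]
        rw [h1, h2]
        have : ∑ r ∈ Finset.Icc 1 k, (r:ℝ) = ∑ r ∈ Finset.Icc 1 k, ((r:ℝ)-1) + k := by
          rw [Finset.sum_sub_distrib]
          simp [Nat.Icc_eq_range', mul_comm]
        rw [this]; push_cast; ring

private lemma telescope_aux (G : ℕ → ℝ) (N : ℕ) :
    ∑ s ∈ Finset.Icc 1 N, (G s - G (s-1)) = G N - G 0 := by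
  induction N with
  | zero => simp
  | succ k ih =>
      rw [Finset.sum_Icc_succ_top (by omega : 1 ≤ k + 1), ih]
      simp

/-- Let `N ≥ 1` and `f : {1,…,N} → ℝ` fractions in `[0,1]` with prefix sums
`F s = f 1 + ⋯ + f s` (so `F 0 = 0`), `F N > 0`, and `n = ⌈F N⌉` buckets.  Then there is a
fragment assignment `g : {1,…,N} × {1,…,n} → ℝ` such that:
(i) `g s r ≥ 0`;
(ii) `Σ_{r=1}^{n} g s r = f s` for every item `s`;
(iii) `Σ_{s=1}^{N} g s r ≤ 1` for every bucket `r`, with equality for `r ≤ n - 1`;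
(iv) each item has positive fragments in at most two buckets, and these are consecutive;
(v) the assignment respects the item order: `s < s'`, `g s r > 0`, `g s' r' > 0` imply
`r ≤ r'`. -/
theorem greedy_bucket_construction (N : ℕ) (hN : 1 ≤ N) (f : ℕ → ℝ)
    (hf_nonneg : ∀ s : ℕ, 1 ≤ s → s ≤ N → 0 ≤ f s)
    (hf_le_one : ∀ s : ℕ, 1 ≤ s → s ≤ N → f s ≤ 1)
    (F : ℕ → ℝ) (hF : ∀ s : ℕ, F s = ∑ t ∈ Finset.Icc 1 s, f t)
    (hFN : 0 < F N)
    (n : ℕ) (hn : n = ⌈F N⌉₊) :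
    ∃ g : ℕ → ℕ → ℝ,
      (∀ s r : ℕ, 1 ≤ s → s ≤ N → 1 ≤ r → r ≤ n → 0 ≤ g s r) ∧
      (∀ s : ℕ, 1 ≤ s → s ≤ N → ∑ r ∈ Finset.Icc 1 n, g s r = f s) ∧
      (∀ r : ℕ, 1 ≤ r → r ≤ n → ∑ s ∈ Finset.Icc 1 N, g s r ≤ 1) ∧
      (∀ r : ℕ, 1 ≤ r → r ≤ n - 1 → ∑ s ∈ Finset.Icc 1 N, g s r = 1) ∧
      (∀ s r r' : ℕ, 1 ≤ s → s ≤ N → 1 ≤ r → r ≤ n → 1 ≤ r' → r' ≤ n → r < r' →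
        0 < g s r → 0 < g s r' → r' = r + 1) ∧
      (∀ s s' r r' : ℕ, 1 ≤ s → s ≤ N → 1 ≤ s' → s' ≤ N → s < s' →
        1 ≤ r → r ≤ n → 1 ≤ r' → r' ≤ n → 0 < g s r → 0 < g s' r' → r ≤ r') := by
  -- d r y : the value y clamped into [r-1, r]
  set d : ℕ → ℝ → ℝ := fun r y => max ((r:ℝ)-1) (min (r:ℝ) y) with hd
  -- basic facts on F
  have hF0 : F 0 = 0 := by simp [hF]
  have hFstep : ∀ s : ℕ, 1 ≤ s → F s = F (s-1) + f s := by
    intro s hs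
    obtain ⟨k, rfl⟩ : ∃ k, s = k + 1 := ⟨s - 1, by omega⟩
    rw [hF, hF, Finset.sum_Icc_succ_top (by omega : 1 ≤ k + 1)]
    simp
  have hFmono : ∀ s t : ℕ, s ≤ t → t ≤ N → F s ≤ F t := by
    intro s t hst htN
    rw [hF, hF]
    refine Finset.sum_le_sum_of_subset_of_nonneg ?_ ?_
    · exact Finset.Icc_subset_Icc_right hst
    · intro i hi _
      have := Finset.mem_Icc.mp hi
      exact hf_nonneg i this.1 (le_trans this.2 htN)
  have hFnn : ∀ s : ℕ, s ≤ N → 0 ≤ F s := fun s hs => hF0 ▸ hFmono 0 s (by omega) hs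
  have hFleN : ∀ s : ℕ, s ≤ N → F s ≤ F N := fun s hs => hFmono s N hs le_rfl
  have hFNle : F N ≤ (n:ℝ) := by rw [hn]; exact Nat.le_ceil _
  have hn1 : 1 ≤ n := by
    rw [hn]; exact Nat.one_le_ceil_iff.mpr hFN
  have hnlt : ((n-1:ℕ):ℝ) < F N := by
    by_contra h
    push_neg at h
    rw [hn] at h
    have := Nat.ceil_le.mpr h
    omega
  -- monotonicity of d
  have hdmono : ∀ r : ℕ, ∀ y z : ℝ, y ≤ z → d r y ≤ d r z := by
    intro r y z hyz
    exact max_le_max le_rfl (min_le_min le_rfl hyz)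
  refine ⟨fun s r => d r (F s) - d r (F (s-1)), ?_, ?_, ?_, ?_, ?_, ?_⟩
  · -- nonneg
    intro s r hs hsN hr hrn
    dsimp only
    have : F (s-1) ≤ F s := by
      rw [hFstep s hs]; have := hf_nonneg s hs hsN; linarith
    linarith [hdmono r _ _ this]
  · -- row sums
    intro s hs hsN
    dsimp only
    rw [Finset.sum_sub_distrib]
    have h1 : ∑ r ∈ Finset.Icc 1 n, d r (F s)
        = F s + ∑ r ∈ Finset.Icc 1 n, ((r:ℝ)-1) :=
      sum_clamp_aux n (F s) (hFnn s hsN) (le_trans (hFleN s hsN) hFNle)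
    have h2 : ∑ r ∈ Finset.Icc 1 n, d r (F (s-1))
        = F (s-1) + ∑ r ∈ Finset.Icc 1 n, ((r:ℝ)-1) :=
      sum_clamp_aux n (F (s-1)) (hFnn _ (by omega)) (le_trans (hFleN _ (by omega)) hFNle)
    rw [h1, h2, hFstep s hs]; ring
  all_goals {
    have htel : ∀ r : ℕ, ∑ s ∈ Finset.Icc 1 N, (d r (F s) - d r (F (s-1)))
        = d r (F N) - d r (F 0) := by
      intro r
      exact telescope_aux (fun i => d r (F i)) N
    -- positivity characterization
    have hpos : ∀ s r : ℕ, 1 ≤ s → 0 < d r (F s) - d r (F (s-1)) →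
        ((r:ℝ) - 1 < F s ∧ F (s-1) < r) := by
      intro s r hs hg
      constructor
      · by_contra h
        push_neg at h
        have h1 : d r (F s) = (r:ℝ) - 1 := by
          simp only [hd]
          rw [max_eq_left (le_trans (min_le_right _ _) h)]
        have h2 : (r:ℝ) - 1 ≤ d r (F (s-1)) := le_max_left _ _
        linarith
      · by_contra h
        push_neg at h
        have h2 : d r (F (s-1)) = (r:ℝ) := by
          simp only [hd]
          rw [min_eq_left h, max_eq_right (by linarith)]
        have h1 : d r (F s) ≤ (r:ℝ) :=
          max_le (by linarith) (min_le_left _ _)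
        linarith
    first
    | { -- column sums ≤ 1
        intro r hr hrn
        dsimp only
        rw [htel r, hF0]
        have h0 : d r 0 = (r:ℝ) - 1 := by
          simp only [hd]
          rw [max_eq_left (le_trans (min_le_right _ _) (by
            have : (1:ℝ) ≤ (r:ℝ) := by exact_mod_cast hr
            linarith))]
        have h1 : d r (F N) ≤ (r:ℝ) := max_le (by linarith) (min_le_left _ _)
        rw [h0]; linarith }
    | { -- column sums = 1 for r ≤ n-1
        intro r hr hrn
        dsimp only
        rw [htel r, hF0]
        have hrF : (r:ℝ) ≤ F N := by
          refine le_trans ?_ (le_of_lt hnlt)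
          exact_mod_cast hrn
        have h0 : d r 0 = (r:ℝ) - 1 := by
          simp only [hd]
          rw [max_eq_left (le_trans (min_le_right _ _) (by
            have : (1:ℝ) ≤ (r:ℝ) := by exact_mod_cast hr
            linarith))]
        have h1 : d r (F N) = (r:ℝ) := by
          simp only [hd]
          rw [min_eq_left hrF, max_eq_right (by linarith)]
        rw [h0, h1]; ring }
    | { -- consecutive buckets
        intro s r r' hs hsN hr hrn hr' hr'n hrr' hg hg'
        dsimp only at hg hg'
        obtain ⟨_, hb⟩ := hpos s r hs hg
        obtain ⟨ha, _⟩ := hpos s r' hs hg'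
        have hfs : F s ≤ F (s-1) + 1 := by
          rw [hFstep s hs]; linarith [hf_le_one s hs hsN]
        have : ((r':ℕ):ℝ) - 1 < (r:ℝ) + 1 := by linarith
        have : (r':ℕ) < r + 2 := by exact_mod_cast (by linarith : ((r':ℕ):ℝ) < (r:ℝ) + 2)
        omega }
    | { -- order respecting
        intro s s' r r' hs hsN hs' hs'N hss' hr hrn hr' hr'n hg hg'
        dsimp only at hg hg'
        obtain ⟨ha, _⟩ := hpos s r hs hg
        obtain ⟨_, hb⟩ := hpos s' r' hs' hg'
        have hF' : F s ≤ F (s'-1) := hFmono s (s'-1) (by omega) (by omega)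
        have : (r:ℝ) - 1 < (r':ℝ) := by linarith
        have : r < r' + 1 := by exact_mod_cast (by linarith : (r:ℝ) < (r':ℝ) + 1)
        omega }
  }
end

section
/- Let E ⊆ V₁ × V₂ × V₃ be the edge set of a finite tripartite 3-uniform hypergraph with nonnegative edge weights u : E → ℝ. Then there exists a matching M ⊆ E such that Σ_{e ∈ M} u(e) ≥ (1/2) · Σ_{e ∈ E} F(e)·u(e) for every fractional matching F of the hypergraph. Equivalently, the maximum weight of an integral matching is at least half of the optimal value of the fractional matching linear program. -/
namespace TriMatch

open Finset

set_option linter.unusedSectionVars false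
set_option maxHeartbeats 1000000

attribute [local instance] Classical.propDecidable

variable {V₁ V₂ V₃ : Type*} [DecidableEq V₁] [DecidableEq V₂] [DecidableEq V₃]

/-- vertex type -/
abbrev W (V₁ V₂ V₃ : Type*) := V₁ ⊕ (V₂ ⊕ V₃)

def inc (w : W V₁ V₂ V₃) (e : V₁ × V₂ × V₃) : Prop :=
  match w with
  | Sum.inl a => e.1 = a
  | Sum.inr (Sum.inl b) => e.2.1 = b
  | Sum.inr (Sum.inr c) => e.2.2 = c

section Defs

variable (E : Finset (V₁ × V₂ × V₃)) (u x : V₁ × V₂ × V₃ → ℝ)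

noncomputable def star (w : W V₁ V₂ V₃) : Finset (V₁ × V₂ × V₃) := E.filter (inc w)

def Feas (x : V₁ × V₂ × V₃ → ℝ) : Prop :=
  (∀ e ∉ E, x e = 0) ∧ (∀ e ∈ E, 0 ≤ x e) ∧ ∀ w : W V₁ V₂ V₃, ∑ e ∈ star E w, x e ≤ 1

def val : ℝ := ∑ e ∈ E, x e * u e

noncomputable def supp : Finset (V₁ × V₂ × V₃) := E.filter fun e => x e ≠ 0

def WR : Finset (W V₁ V₂ V₃) :=
  E.image (fun e => Sum.inl e.1) ∪ E.image (fun e => Sum.inr (Sum.inl e.2.1)) ∪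
    E.image (fun e => Sum.inr (Sum.inr e.2.2))

def tight (w : W V₁ V₂ V₃) : Prop := ∑ e ∈ star E w, x e = 1

noncomputable def TS : Finset (W V₁ V₂ V₃) := (WR E).filter (tight E x)

def meets (e e' : V₁ × V₂ × V₃) : Prop := e.1 = e'.1 ∨ e.2.1 = e'.2.1 ∨ e.2.2 = e'.2.2

end Defs

variable {E : Finset (V₁ × V₂ × V₃)} {u x : V₁ × V₂ × V₃ → ℝ}

lemma inc_cases (e : V₁ × V₂ × V₃) (w : W V₁ V₂ V₃) (h : inc w e) :
    w = Sum.inl e.1 ∨ w = Sum.inr (Sum.inl e.2.1) ∨ w = Sum.inr (Sum.inr e.2.2) := by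
  rcases w with a | b | c
  · simp only [inc] at h; subst h; exact Or.inl rfl
  · simp only [inc] at h; subst h; exact Or.inr (Or.inl rfl)
  · simp only [inc] at h; subst h; exact Or.inr (Or.inr rfl)

lemma mem_WR_of_inc {e : V₁ × V₂ × V₃} (he : e ∈ E) {w : W V₁ V₂ V₃} (h : inc w e) : w ∈ WR E := by
  rcases inc_cases e w h with rfl | rfl | rfl
  · exact mem_union_left _ (mem_union_left _ (mem_image_of_mem _ he))
  · exact mem_union_left _ (mem_union_right _ (mem_image_of_mem _ he))
  · exact mem_union_right _ (mem_image_of_mem _ he)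

lemma exists_opt (E : Finset (V₁ × V₂ × V₃)) (u : V₁ × V₂ × V₃ → ℝ) :
    ∃ x, Feas E x ∧ ∀ y, Feas E y → val E u y ≤ val E u x := by
  classical
  set K : Set ((V₁ × V₂ × V₃) → ℝ) := {x | Feas E x} with hKdef
  have hKne : K.Nonempty := ⟨0, by
    refine ⟨fun e _ => rfl, fun e _ => le_refl 0, fun w => ?_⟩
    simp [star]⟩
  have hsub : K ⊆ Set.pi Set.univ (fun e => if e ∈ E then Set.Icc (0:ℝ) 1 else {0}) := by
    intro x hx e _
    obtain ⟨h0, h1, h2⟩ := hx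
    by_cases he : e ∈ E
    · simp only [he, if_true]
      refine Set.mem_Icc.2 ⟨h1 e he, ?_⟩
      have hle : x e ≤ ∑ e' ∈ star E (Sum.inl e.1), x e' := by
        refine single_le_sum (fun i hi => h1 i (mem_filter.1 hi).1) ?_
        simp [star, inc, he, mem_filter]
      exact hle.trans (h2 _)
    · simp [he, h0 e he]
  have hKc : IsClosed K := by
    have hKeq : K = (⋂ e, ⋂ (_ : e ∉ E), {x : (V₁ × V₂ × V₃) → ℝ | x e = 0}) ∩
        ((⋂ e ∈ E, {x | 0 ≤ x e}) ∩ ⋂ w : W V₁ V₂ V₃, {x | ∑ e ∈ star E w, x e ≤ 1}) := by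
      ext x
      simp only [Set.mem_setOf_eq, Set.mem_inter_iff, Set.mem_iInter, hKdef, Feas]
      try tauto
    rw [hKeq]
    refine IsClosed.inter (isClosed_iInter fun e => isClosed_iInter fun _ =>
        isClosed_eq (continuous_apply e) continuous_const) (IsClosed.inter
      (isClosed_iInter fun e => isClosed_iInter fun _ =>
        isClosed_le continuous_const (continuous_apply e))
      (isClosed_iInter fun w => isClosed_le
        (continuous_finset_sum _ fun e _ => continuous_apply e) continuous_const))
  have hbox : IsCompact (Set.pi Set.univ
      (fun e : V₁ × V₂ × V₃ => if e ∈ E then Set.Icc (0:ℝ) 1 else {0})) := by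
    refine isCompact_univ_pi fun e => ?_
    by_cases he : e ∈ E <;> simp [he, isCompact_Icc, isCompact_singleton]
  have hK : IsCompact K := hbox.of_isClosed_subset hKc hsub
  have hcont : Continuous (val E u) := by
    unfold val; exact continuous_finset_sum _ fun e _ => (continuous_apply e).mul continuous_const
  obtain ⟨x, hxK, hmax⟩ := hK.exists_isMaxOn hKne hcont.continuousOn
  exact ⟨x, hxK, fun y hy => hmax hy⟩

section Chunk2
variable {V₁ V₂ V₃ : Type*} [DecidableEq V₁] [DecidableEq V₂] [DecidableEq V₃]
variable {E : Finset (V₁ × V₂ × V₃)} {u x : V₁ × V₂ × V₃ → ℝ}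

lemma star_eq_empty {w : W V₁ V₂ V₃} (hw : w ∉ WR E) : star E w = ∅ := by
  refine Finset.filter_eq_empty_iff.2 fun {e} he hinc => hw (mem_WR_of_inc he hinc)

lemma sum_star_add (d : V₁ × V₂ × V₃ → ℝ) (ε : ℝ) (w : W V₁ V₂ V₃) :
    ∑ e ∈ star E w, (x e + ε * d e) = (∑ e ∈ star E w, x e) + ε * ∑ e ∈ star E w, d e := by
  rw [Finset.sum_add_distrib, Finset.mul_sum]

lemma val_add (E : Finset (V₁ × V₂ × V₃)) (u x d : V₁ × V₂ × V₃ → ℝ) (ε : ℝ) :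
    val E u (fun e => x e + ε * d e) = val E u x + ε * ∑ e ∈ E, d e * u e := by
  unfold val
  rw [Finset.mul_sum, ← Finset.sum_add_distrib]
  exact Finset.sum_congr rfl fun e _ => by ring

lemma perturb_feas (hx : Feas E x) {d : V₁ × V₂ × V₃ → ℝ} {ε : ℝ}
    (hd0 : ∀ e ∉ supp E x, d e = 0)
    (hdT : ∀ w ∈ TS E x, ∑ e ∈ star E w, d e = 0) (hε0 : 0 < ε)
    (hεA : ∀ e ∈ supp E x, d e < 0 → ε ≤ x e / (-(d e)))
    (hεB : ∀ w ∈ WR E, ¬ tight E x w → 0 < ∑ e ∈ star E w, d e →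
      ε ≤ (1 - ∑ e ∈ star E w, x e) / (∑ e ∈ star E w, d e)) :
    Feas E (fun e => x e + ε * d e) := by
  obtain ⟨hz, hnn, hvw⟩ := hx
  refine ⟨fun e he => ?_, fun e he => ?_, fun w => ?_⟩
  · have : e ∉ supp E x := fun hmem => he (Finset.mem_filter.1 hmem).1
    show x e + ε * d e = 0
    rw [hz e he, hd0 e this, mul_zero, add_zero]
  · by_cases hde : d e < 0
    · have hes : e ∈ supp E x := by
        refine Finset.mem_filter.2 ⟨he, ?_⟩
        intro h0
        exact absurd (hd0 e (fun hmem => (Finset.mem_filter.1 hmem).2 h0)) (ne_of_lt hde)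
      have h1 : ε ≤ x e / (-(d e)) := hεA e hes hde
      have h2 : 0 < -(d e) := by linarith
      rw [le_div_iff₀ h2] at h1
      have h3 : ε * (-(d e)) = -(ε * d e) := by ring
      show 0 ≤ x e + ε * d e
      linarith
    · push_neg at hde
      have h4 := hnn e he
      have h5 : 0 ≤ ε * d e := mul_nonneg (le_of_lt hε0) hde
      show 0 ≤ x e + ε * d e
      linarith
  · rw [sum_star_add]
    by_cases hw : w ∈ WR E
    · by_cases ht : tight E x w
      · have : w ∈ TS E x := Finset.mem_filter.2 ⟨hw, ht⟩
        rw [hdT w this, mul_zero, add_zero]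
        exact le_of_eq ht
      · by_cases hsd : 0 < ∑ e ∈ star E w, d e
        · have h1 := hεB w hw ht hsd
          rw [le_div_iff₀ hsd] at h1
          linarith
        · push_neg at hsd
          have h6 := hvw w
          have h7 : ε * ∑ e ∈ star E w, d e ≤ 0 :=
            mul_nonpos_of_nonneg_of_nonpos (le_of_lt hε0) hsd
          linarith
    · rw [star_eq_empty hw]
      simp

end Chunk2

section Chunk3
variable {V₁ V₂ V₃ : Type*} [DecidableEq V₁] [DecidableEq V₂] [DecidableEq V₃]
variable {E : Finset (V₁ × V₂ × V₃)} {u : V₁ × V₂ × V₃ → ℝ}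

lemma exists_extremal (E : Finset (V₁ × V₂ × V₃)) (u : V₁ × V₂ × V₃ → ℝ) :
    ∃ x, Feas E x ∧ (∀ y, Feas E y → val E u y ≤ val E u x) ∧
      ∀ d : (V₁ × V₂ × V₃) → ℝ, (∀ e ∉ supp E x, d e = 0) →
        (∀ w ∈ TS E x, ∑ e ∈ star E w, d e = 0) → ∀ e ∈ E, d e = 0 := by
  classical
  obtain ⟨x₀, hx₀, hopt₀⟩ := exists_opt E u
  set Opt : Set ((V₁ × V₂ × V₃) → ℝ) := {y | Feas E y ∧ val E u y = val E u x₀} with hOpt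
  have hx₀Opt : x₀ ∈ Opt := ⟨hx₀, rfl⟩
  set A : Set ℕ := (fun y => (supp E y).card) '' Opt with hA
  have hAne : A.Nonempty := ⟨_, x₀, hx₀Opt, rfl⟩
  set k := sInf A with hkdef
  obtain ⟨y₁, hy₁Opt, hy₁k⟩ := Nat.sInf_mem hAne
  set B : Set ℕ := {n | ∃ y, y ∈ Opt ∧ (supp E y).card = k ∧ (TS E y).card = n} with hB
  have hBne : B.Nonempty := ⟨_, y₁, hy₁Opt, hy₁k, rfl⟩
  have hBbdd : BddAbove B := ⟨(WR E).card, fun n hn => by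
    obtain ⟨y, _, _, hTSy⟩ := hn
    rw [← hTSy]; exact Finset.card_le_card (Finset.filter_subset _ _)⟩
  set t := sSup B with htdef
  obtain ⟨x, hxOpt, hxk, hxt⟩ := Nat.sSup_mem hBne hBbdd
  obtain ⟨hxF, hxval⟩ := hxOpt
  refine ⟨x, hxF, fun y hy => (hopt₀ y hy).trans_eq hxval.symm, ?_⟩
  intro d hd0 hdT
  by_contra hcon
  push_neg at hcon
  obtain ⟨estar, hestarE, hestar⟩ := hcon
  have hestars : estar ∈ supp E x := by
    by_contra h; exact hestar (hd0 _ h)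
  -- Step 1 : any admissible direction has nonpositive objective
  have step1 : ∀ d' : (V₁ × V₂ × V₃) → ℝ, (∀ e ∉ supp E x, d' e = 0) →
      (∀ w ∈ TS E x, ∑ e ∈ star E w, d' e = 0) → ∑ e ∈ E, d' e * u e ≤ 0 := by
    intro d' hd0' hdT'
    by_contra hpos
    push_neg at hpos
    set RA := ((supp E x).filter (fun e => d' e < 0)).image (fun e => x e / (-(d' e))) with hRA
    set RB := ((WR E).filter (fun w => ¬ tight E x w ∧ 0 < ∑ e ∈ star E w, d' e)).image
        (fun w => (1 - ∑ e ∈ star E w, x e) / (∑ e ∈ star E w, d' e)) with hRB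
    set R := insert (1:ℝ) (RA ∪ RB) with hR
    have hRne : R.Nonempty := ⟨1, Finset.mem_insert_self _ _⟩
    set ε := R.min' hRne with hεdef
    have hεmem := R.min'_mem hRne
    have hposR : ∀ r ∈ R, 0 < r := by
      intro r hr
      rcases Finset.mem_insert.1 hr with rfl | hr'
      · norm_num
      rcases Finset.mem_union.1 hr' with h | h
      · obtain ⟨e, hef, rfl⟩ := Finset.mem_image.1 h
        obtain ⟨hes, hde⟩ := Finset.mem_filter.1 hef
        obtain ⟨heE, hxne⟩ := Finset.mem_filter.1 hes
        have hxpos : 0 < x e := lt_of_le_of_ne (hxF.2.1 e heE) (Ne.symm hxne)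
        exact div_pos hxpos (by linarith)
      · obtain ⟨w, hwf, rfl⟩ := Finset.mem_image.1 h
        obtain ⟨hw, hnt, hsd⟩ := Finset.mem_filter.1 hwf
        have hle := hxF.2.2 w
        have hlt : ∑ e ∈ star E w, x e < 1 := lt_of_le_of_ne hle hnt
        exact div_pos (by linarith) hsd
    have hε0 : 0 < ε := hposR _ hεmem
    have hfeas : Feas E (fun e => x e + ε * d' e) := by
      refine perturb_feas hxF hd0' hdT' hε0 ?_ ?_
      · intro e hes hde
        exact R.min'_le _ (Finset.mem_insert_of_mem (Finset.mem_union_left _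
          (Finset.mem_image_of_mem _ (Finset.mem_filter.2 ⟨hes, hde⟩))))
      · intro w hw hnt hsd
        exact R.min'_le _ (Finset.mem_insert_of_mem (Finset.mem_union_right _
          (Finset.mem_image_of_mem _ (Finset.mem_filter.2 ⟨hw, hnt, hsd⟩))))
    have hle := hopt₀ _ hfeas
    rw [val_add] at hle
    nlinarith [mul_pos hε0 hpos]
  have hc0 : ∑ e ∈ E, d e * u e = 0 := by
    have h1 := step1 d hd0 hdT
    have h2 := step1 (fun e => -(d e)) (fun e he => by show -(d e) = 0; rw [hd0 e he]; ring)
      (fun w hw => by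
        have := hdT w hw
        simp only [Finset.sum_neg_distrib, this, neg_zero])
    simp only [neg_mul, Finset.sum_neg_distrib] at h2
    linarith
  -- Step 2 engine
  have step2 : ∀ d' : (V₁ × V₂ × V₃) → ℝ, (∀ e ∉ supp E x, d' e = 0) →
      (∀ w ∈ TS E x, ∑ e ∈ star E w, d' e = 0) → (∑ e ∈ E, d' e * u e = 0) →
      d' estar < 0 → False := by
    intro d' hd0' hdT' hc0' hneg
    set RA := ((supp E x).filter (fun e => d' e < 0)).image (fun e => x e / (-(d' e))) with hRA
    set RB := ((WR E).filter (fun w => ¬ tight E x w ∧ 0 < ∑ e ∈ star E w, d' e)).image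
        (fun w => (1 - ∑ e ∈ star E w, x e) / (∑ e ∈ star E w, d' e)) with hRB
    set R := RA ∪ RB with hR
    have hRne : R.Nonempty :=
      ⟨_, Finset.mem_union_left _ (Finset.mem_image_of_mem _
        (Finset.mem_filter.2 ⟨hestars, hneg⟩))⟩
    set ε := R.min' hRne with hεdef
    have hεmem := R.min'_mem hRne
    have hposR : ∀ r ∈ R, 0 < r := by
      intro r hr
      rcases Finset.mem_union.1 hr with h | h
      · obtain ⟨e, hef, rfl⟩ := Finset.mem_image.1 h
        obtain ⟨hes, hde⟩ := Finset.mem_filter.1 hef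
        obtain ⟨heE, hxne⟩ := Finset.mem_filter.1 hes
        have hxpos : 0 < x e := lt_of_le_of_ne (hxF.2.1 e heE) (Ne.symm hxne)
        exact div_pos hxpos (by linarith)
      · obtain ⟨w, hwf, rfl⟩ := Finset.mem_image.1 h
        obtain ⟨hw, hnt, hsd⟩ := Finset.mem_filter.1 hwf
        have hle := hxF.2.2 w
        have hlt : ∑ e ∈ star E w, x e < 1 := lt_of_le_of_ne hle hnt
        exact div_pos (by linarith) hsd
    have hε0 : 0 < ε := hposR _ hεmem
    set x' : (V₁ × V₂ × V₃) → ℝ := fun e => x e + ε * d' e with hx'def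
    have hx'F : Feas E x' := by
      refine perturb_feas hxF hd0' hdT' hε0 ?_ ?_
      · intro e hes hde
        exact R.min'_le _ (Finset.mem_union_left _
          (Finset.mem_image_of_mem _ (Finset.mem_filter.2 ⟨hes, hde⟩)))
      · intro w hw hnt hsd
        exact R.min'_le _ (Finset.mem_union_right _
          (Finset.mem_image_of_mem _ (Finset.mem_filter.2 ⟨hw, hnt, hsd⟩)))
    have hx'val : val E u x' = val E u x₀ := by
      rw [hx'def, val_add, hc0', mul_zero, add_zero, hxval]
    have hx'Opt : x' ∈ Opt := ⟨hx'F, hx'val⟩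
    have hsuppsub : supp E x' ⊆ supp E x := by
      intro e he'
      obtain ⟨heE, hne⟩ := Finset.mem_filter.1 he'
      refine Finset.mem_filter.2 ⟨heE, fun h0 => ?_⟩
      have hd0e : d' e = 0 := hd0' e (fun hmem => (Finset.mem_filter.1 hmem).2 h0)
      exact hne (by show x e + ε * d' e = 0; rw [h0, hd0e]; ring)
    have hkle : k ≤ (supp E x').card := Nat.sInf_le ⟨x', hx'Opt, rfl⟩
    rcases Finset.mem_union.1 hεmem with h | h
    · obtain ⟨eminus, hef, hre⟩ := Finset.mem_image.1 h
      obtain ⟨hes, hde⟩ := Finset.mem_filter.1 hef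
      rw [← hεdef] at hre
      have hdne : d' eminus ≠ 0 := ne_of_lt hde
      have hx'0 : x' eminus = 0 := by
        show x eminus + ε * d' eminus = 0
        rw [← hre]
        field_simp [hdne]
        ring
      have hnotmem : eminus ∉ supp E x' := fun hmem => (Finset.mem_filter.1 hmem).2 hx'0
      have hlt : (supp E x').card < k := by
        rw [← hxk]
        exact Finset.card_lt_card ⟨hsuppsub, fun hsub => hnotmem (hsub hes)⟩
      omega
    · obtain ⟨wminus, hwf, hrw⟩ := Finset.mem_image.1 h
      obtain ⟨hwWR, hnt, hsd⟩ := Finset.mem_filter.1 hwf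
      rw [← hεdef] at hrw
      have hsdne : (∑ e ∈ star E wminus, d' e) ≠ 0 := ne_of_gt hsd
      have htight' : tight E x' wminus := by
        show ∑ e ∈ star E wminus, x' e = 1
        rw [hx'def, sum_star_add, ← hrw]
        field_simp
        ring
      have hTSsub : TS E x ⊆ TS E x' := by
        intro w hw
        obtain ⟨hwWR', hwt⟩ := Finset.mem_filter.1 hw
        refine Finset.mem_filter.2 ⟨hwWR', ?_⟩
        show ∑ e ∈ star E w, x' e = 1
        rw [hx'def, sum_star_add, hdT' w hw, mul_zero, add_zero]
        exact hwt
      have hwTS' : wminus ∈ TS E x' := Finset.mem_filter.2 ⟨hwWR, htight'⟩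
      have hwnot : wminus ∉ TS E x := fun hmem => hnt (Finset.mem_filter.1 hmem).2
      have hcardlt : t < (TS E x').card := by
        have hins : insert wminus (TS E x) ⊆ TS E x' := Finset.insert_subset hwTS' hTSsub
        have h1 : (insert wminus (TS E x)).card = (TS E x).card + 1 :=
          Finset.card_insert_of_notMem hwnot
        have h2 := Finset.card_le_card hins
        omega
      have hsuppk : (supp E x').card = k :=
        le_antisymm (hxk ▸ Finset.card_le_card hsuppsub) hkle
      have hlet : (TS E x').card ≤ t := le_csSup hBbdd ⟨x', hx'Opt, hsuppk, rfl⟩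
      omega
  rcases lt_or_gt_of_ne hestar with hneg | hpos
  · exact step2 d hd0 hdT hc0 hneg
  · refine step2 (fun e => -(d e)) (fun e he => by show -(d e) = 0; rw [hd0 e he]; ring)
      (fun w hw => by
        have := hdT w hw
        simp only [Finset.sum_neg_distrib, this, neg_zero])
      (by simp only [neg_mul, Finset.sum_neg_distrib, hc0, neg_zero]) (by simpa using hpos)

end Chunk3

section Chunk4
variable {V₁ V₂ V₃ : Type*} [DecidableEq V₁] [DecidableEq V₂] [DecidableEq V₃]
variable {E : Finset (V₁ × V₂ × V₃)} {u x : V₁ × V₂ × V₃ → ℝ}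

/-- sign coefficients for the tripartite row dependency -/
def cW : W V₁ V₂ V₃ → ℝ := fun w =>
  match w with
  | Sum.inl _ => 1
  | Sum.inr (Sum.inl _) => -1
  | Sum.inr (Sum.inr _) => 0

def tripleW (e : V₁ × V₂ × V₃) : Finset (W V₁ V₂ V₃) :=
  {Sum.inl e.1, Sum.inr (Sum.inl e.2.1), Sum.inr (Sum.inr e.2.2)}

lemma sum_star_eq_sum_supp (d : V₁ × V₂ × V₃ → ℝ) (hd : ∀ e ∉ supp E x, d e = 0)
    (w : W V₁ V₂ V₃) :
    ∑ e ∈ (supp E x).filter (inc w), d e = ∑ e ∈ star E w, d e := by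
  refine Finset.sum_subset ?_ ?_
  · intro e he
    obtain ⟨hes, hinc⟩ := Finset.mem_filter.1 he
    exact Finset.mem_filter.2 ⟨(Finset.mem_filter.1 hes).1, hinc⟩
  · intro e he hne
    refine hd e fun hmem => hne ?_
    exact Finset.mem_filter.2 ⟨hmem, (Finset.mem_filter.1 he).2⟩

lemma exists_half (E : Finset (V₁ × V₂ × V₃)) (u : V₁ × V₂ × V₃ → ℝ) :
    ∃ x, Feas E x ∧ (∀ y, Feas E y → val E u y ≤ val E u x) ∧
      (supp E x = ∅ ∨ ∃ e₀ ∈ E, 1/2 ≤ x e₀) := by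
  classical
  obtain ⟨x, hxF, hopt, hext⟩ := exists_extremal E u
  refine ⟨x, hxF, hopt, ?_⟩
  by_cases hS : supp E x = ∅
  · exact Or.inl hS
  refine Or.inr ?_
  by_contra hcon
  push_neg at hcon
  have hsmall : ∀ e ∈ E, x e < 1/2 := fun e he =>
    lt_of_not_ge fun hle => absurd hle (not_le.2 (hcon e he))
  obtain ⟨e₁, he₁⟩ := Finset.nonempty_iff_ne_empty.2 hS
  set S := supp E x with hSdef
  set T := TS E x with hTdef
  -- the incidence matrix restricted to support columns and tight rows
  set A : Matrix ↥T ↥S ℝ := Matrix.of (fun w e => if inc w.1 e.1 then (1:ℝ) else 0) with hA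
  set L := A.mulVecLin with hL
  -- injectivity
  have hLinj : Function.Injective L := by
    rw [← LinearMap.ker_eq_bot]
    refine (Submodule.eq_bot_iff _).2 fun dvec hdvec => ?_
    have hdvec' : A.mulVec dvec = 0 := hdvec
    set D : (V₁ × V₂ × V₃) → ℝ := fun e => if h : e ∈ S then dvec ⟨e, h⟩ else 0 with hD
    have hD0 : ∀ e ∉ S, D e = 0 := fun e he => dif_neg he
    have hDT : ∀ w ∈ T, ∑ e ∈ star E w, D e = 0 := by
      intro w hw
      rw [← sum_star_eq_sum_supp D hD0 w]
      have h1 : ∑ e ∈ S.filter (inc w), D e = ∑ e ∈ S, if inc w e then D e else 0 :=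
        Finset.sum_filter _ _
      have h2 : ∑ e ∈ S, (if inc w e then D e else 0) =
          ∑ e : ↥S, (if inc w e.1 then D e.1 else 0) :=
        (Finset.sum_coe_sort S _).symm
      have h3 : ∀ e : ↥S, (if inc w e.1 then D e.1 else 0) = A ⟨w, hw⟩ e * dvec e := by
        intro e
        have : D e.1 = dvec e := by rw [hD]; simp [dif_pos e.2]
        by_cases hinc : inc w e.1 <;> simp [hA, hinc, this]
      have h4 : ∑ e : ↥S, A ⟨w, hw⟩ e * dvec e = A.mulVec dvec ⟨w, hw⟩ := rfl
      rw [h1, h2, Finset.sum_congr rfl fun e _ => h3 e, h4, hdvec']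
      rfl
    have hall : ∀ e ∈ E, D e = 0 := hext D hD0 hDT
    funext e
    have he1 : D e.1 = dvec e := by rw [hD]; simp [dif_pos e.2]
    have he2 : e.1 ∈ E := (Finset.mem_filter.1 e.2).1
    rw [← he1, hall e.1 he2]; rfl
  -- cardinalities
  have hcardST : S.card ≤ T.card := by
    have h := LinearMap.finrank_le_finrank_of_injective hLinj
    simpa [Module.finrank_pi, Fintype.card_coe] using h
  -- every tight vertex has at least three support edges
  have hdeg : ∀ w ∈ T, 3 ≤ (S.filter (inc w)).card := by
    intro w hw
    by_contra hlt
    push_neg at hlt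
    have htw : ∑ e ∈ star E w, x e = 1 := (Finset.mem_filter.1 hw).2
    have hxsupp : ∀ e ∉ S, x e = 0 := by
      intro e he
      by_cases heE : e ∈ E
      · by_contra hne; exact he (Finset.mem_filter.2 ⟨heE, hne⟩)
      · exact hxF.1 e heE
    rw [← sum_star_eq_sum_supp x hxsupp w] at htw
    have hub : ∑ e ∈ S.filter (inc w), x e < 1 := by
      rcases Finset.eq_empty_or_nonempty (S.filter (inc w)) with hemp | hne
      · rw [hemp]; simp
      · have h1 : ∑ e ∈ S.filter (inc w), x e < ∑ e ∈ S.filter (inc w), (1/2 : ℝ) :=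
          Finset.sum_lt_sum_of_nonempty hne fun e he =>
            hsmall e (Finset.mem_filter.1 (Finset.mem_filter.1 he).1).1
        have h2 : ∑ e ∈ S.filter (inc w), (1/2 : ℝ) = (S.filter (inc w)).card * (1/2) := by
          rw [Finset.sum_const]; ring
        have h3 : ((S.filter (inc w)).card : ℝ) ≤ 2 := by
          have : (S.filter (inc w)).card ≤ 2 := by omega
          exact_mod_cast this
        nlinarith
    linarith [htw.ge, hub]
  -- incidence double count
  have hswap : ∑ w ∈ T, (S.filter (inc w)).card = ∑ e ∈ S, (T.filter (fun w => inc w e)).card := by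
    simp only [Finset.card_filter]
    rw [Finset.sum_comm]
  have htriple : ∀ e ∈ S, T.filter (fun w => inc w e) ⊆ tripleW e := by
    intro e _ w hw
    obtain ⟨hwT, hinc⟩ := Finset.mem_filter.1 hw
    rcases inc_cases e w hinc with rfl | rfl | rfl <;> simp [tripleW]
  have htriplecard : ∀ e : V₁ × V₂ × V₃, (tripleW e).card ≤ 3 := by
    intro e
    have h1 := Finset.card_insert_le (Sum.inl e.1 : W V₁ V₂ V₃)
      {Sum.inr (Sum.inl e.2.1), Sum.inr (Sum.inr e.2.2)}
    have h2 := Finset.card_insert_le (Sum.inr (Sum.inl e.2.1) : W V₁ V₂ V₃)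
      {Sum.inr (Sum.inr e.2.2)}
    have h3 : ({Sum.inr (Sum.inr e.2.2)} : Finset (W V₁ V₂ V₃)).card = 1 :=
      Finset.card_singleton _
    show (insert (Sum.inl e.1) {Sum.inr (Sum.inl e.2.1), Sum.inr (Sum.inr e.2.2)} :
      Finset (W V₁ V₂ V₃)).card ≤ 3
    omega
  have hub : ∀ e ∈ S, (T.filter (fun w => inc w e)).card ≤ 3 := fun e he =>
    le_trans (Finset.card_le_card (htriple e he)) (htriplecard e)
  have hlb : 3 * T.card ≤ ∑ w ∈ T, (S.filter (inc w)).card := by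
    calc 3 * T.card = ∑ _w ∈ T, 3 := by rw [Finset.sum_const, smul_eq_mul, mul_comm]
    _ ≤ _ := Finset.sum_le_sum hdeg
  have hub' : ∑ e ∈ S, (T.filter (fun w => inc w e)).card ≤ 3 * S.card := by
    calc ∑ e ∈ S, (T.filter (fun w => inc w e)).card ≤ ∑ _e ∈ S, 3 := Finset.sum_le_sum hub
    _ = 3 * S.card := by rw [Finset.sum_const, smul_eq_mul, mul_comm]
  have hlb' : 3 * T.card ≤ ∑ e ∈ S, (T.filter (fun w => inc w e)).card := by
    rw [← hswap]; exact hlb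
  have hTS' : T.card = S.card := by omega
  have hIeq : ∑ e ∈ S, (T.filter (fun w => inc w e)).card = 3 * S.card := by omega
  have hpoint : ∀ e ∈ S, (T.filter (fun w => inc w e)).card = 3 := by
    intro e he
    by_contra hne
    have hlt : (T.filter (fun w => inc w e)).card < 3 := lt_of_le_of_ne (hub e he) hne
    have : ∑ e ∈ S, (T.filter (fun w => inc w e)).card < ∑ _e ∈ S, 3 :=
      Finset.sum_lt_sum hub ⟨e, he, hlt⟩
    rw [Finset.sum_const, smul_eq_mul, mul_comm] at this
    omega
  have hfeq : ∀ e ∈ S, T.filter (fun w => inc w e) = tripleW e := by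
    intro e he
    refine Finset.eq_of_subset_of_card_le (htriple e he) ?_
    rw [hpoint e he]
    exact htriplecard e
  have hT1 : ∀ e ∈ S, (Sum.inl e.1 : W V₁ V₂ V₃) ∈ T := by
    intro e he
    have : (Sum.inl e.1 : W V₁ V₂ V₃) ∈ tripleW e := by simp [tripleW]
    rw [← hfeq e he] at this
    exact (Finset.mem_filter.1 this).1
  -- the functional φ
  set φ : (↥T → ℝ) →ₗ[ℝ] ℝ :=
    { toFun := fun y => ∑ w : ↥T, cW w.1 * y w
      map_add' := by
        intro y z
        rw [← Finset.sum_add_distrib]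
        exact Finset.sum_congr rfl fun w _ => by simp [mul_add]
      map_smul' := by
        intro a y
        simp only [smul_eq_mul, RingHom.id_apply, Finset.mul_sum]
        exact Finset.sum_congr rfl fun w _ => by
          simp only [Pi.smul_apply, smul_eq_mul]; ring } with hφ
  have hsumtriple : ∀ e ∈ S, ∑ w ∈ tripleW e, cW w = 0 := by
    intro e _
    rw [tripleW, Finset.sum_insert (by simp), Finset.sum_insert (by simp),
      Finset.sum_singleton]
    simp [cW]
  have hφL : ∀ dvec : ↥S → ℝ, φ (L dvec) = 0 := by
    intro dvec
    have h1 : φ (L dvec) = ∑ w : ↥T, cW w.1 * ∑ e : ↥S, A w e * dvec e := rfl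
    rw [h1]
    have h2 : ∀ w : ↥T, cW w.1 * ∑ e : ↥S, A w e * dvec e
        = ∑ e : ↥S, cW w.1 * A w e * dvec e := by
      intro w; rw [Finset.mul_sum]; exact Finset.sum_congr rfl fun e _ => by ring
    rw [Finset.sum_congr rfl fun w _ => h2 w, Finset.sum_comm]
    refine Finset.sum_eq_zero fun e _ => ?_
    have h3 : ∀ w : ↥T, cW w.1 * A w e = if inc w.1 e.1 then cW w.1 else 0 := by
      intro w; by_cases hinc : inc w.1 e.1 <;> simp [hA, hinc]
    have h4 : ∑ w : ↥T, cW w.1 * A w e * dvec e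
        = (∑ w : ↥T, if inc w.1 e.1 then cW w.1 else 0) * dvec e := by
      rw [Finset.sum_mul]
      exact Finset.sum_congr rfl fun w _ => by rw [h3]
    rw [h4]
    have h5 : ∑ w : ↥T, (if inc w.1 e.1 then cW w.1 else 0)
        = ∑ w ∈ T, (if inc w e.1 then cW w else 0) :=
      Finset.sum_coe_sort T (fun w => if inc w e.1 then cW w else 0)
    have h6 : ∑ w ∈ T, (if inc w e.1 then cW w else 0)
        = ∑ w ∈ T.filter (fun w => inc w e.1), cW w := (Finset.sum_filter _ _).symm
    have he1 : e.1 ∈ S := e.2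
    rw [h5, h6, hfeq e.1 he1, hsumtriple e.1 he1, zero_mul]
  -- rank bookkeeping
  have hrange_le : LinearMap.range L ≤ LinearMap.ker φ := by
    rintro y ⟨dvec, rfl⟩
    exact LinearMap.mem_ker.2 (hφL dvec)
  have hr1 : Module.finrank ℝ ↥(LinearMap.range L) = S.card := by
    rw [LinearMap.finrank_range_of_inj hLinj]
    simp [Module.finrank_pi, Fintype.card_coe]
  have hr2 : Module.finrank ℝ ↥(LinearMap.range L) ≤ Module.finrank ℝ ↥(LinearMap.ker φ) :=
    Submodule.finrank_mono hrange_le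
  have hr3 : Module.finrank ℝ ↥(LinearMap.range φ) + Module.finrank ℝ ↥(LinearMap.ker φ)
      = T.card := by
    rw [LinearMap.finrank_range_add_finrank_ker φ]
    simp [Module.finrank_pi, Fintype.card_coe]
  have hφne : LinearMap.range φ ≠ ⊥ := by
    intro hbot
    have he₁S : e₁ ∈ S := he₁
    have hw₁ : (Sum.inl e₁.1 : W V₁ V₂ V₃) ∈ T := hT1 e₁ he₁S
    set y : ↥T → ℝ := Pi.single ⟨Sum.inl e₁.1, hw₁⟩ 1 with hy
    have : φ y = 1 := by
      rw [hφ]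
      simp only [LinearMap.coe_mk, AddHom.coe_mk]
      rw [hy]
      rw [Finset.sum_eq_single (⟨Sum.inl e₁.1, hw₁⟩ : ↥T)]
      · simp [Pi.single_apply, cW]
      · intro b _ hb
        simp [Pi.single_apply, hb]
      · intro hb
        exact absurd (Finset.mem_univ _) hb
    have hmem : φ y ∈ LinearMap.range φ := ⟨y, rfl⟩
    rw [hbot] at hmem
    simp at hmem
    rw [hmem] at this
    norm_num at this
  have hφrank : 1 ≤ Module.finrank ℝ ↥(LinearMap.range φ) := by
    by_contra hlt
    push_neg at hlt
    have h0 : Module.finrank ℝ ↥(LinearMap.range φ) = 0 := by omega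
    exact hφne (Submodule.finrank_eq_zero.1 h0)
  have hSpos : 1 ≤ S.card := Finset.card_pos.2 ⟨e₁, he₁⟩
  omega

end Chunk4

section Chunk5
variable {V₁ V₂ V₃ : Type*} [DecidableEq V₁] [DecidableEq V₂] [DecidableEq V₃]

lemma meets_self (e : V₁ × V₂ × V₃) : meets e e := Or.inl rfl

lemma main_aux : ∀ (n : ℕ) (E : Finset (V₁ × V₂ × V₃)) (u : V₁ × V₂ × V₃ → ℝ),
    E.card ≤ n → (∀ e ∈ E, 0 ≤ u e) →
    ∃ M : Finset (V₁ × V₂ × V₃), M ⊆ E ∧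
      (∀ e ∈ M, ∀ e' ∈ M, e ≠ e' → e.1 ≠ e'.1 ∧ e.2.1 ≠ e'.2.1 ∧ e.2.2 ≠ e'.2.2) ∧
      ∀ y, Feas E y → val E u y ≤ 2 * ∑ e ∈ M, u e := by
  intro n
  induction n with
  | zero =>
    intro E u hcard _
    have hE : E = ∅ := Finset.card_eq_zero.1 (Nat.le_zero.1 hcard)
    refine ⟨∅, by simp, by simp, fun y _ => ?_⟩
    rw [hE]
    simp [val]
  | succ n ih =>
    intro E u hcard hu
    obtain ⟨x, hxF, hopt, hhalf⟩ := exists_half E u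
    rcases hhalf with hsupp | ⟨e₀, he₀E, hx₀⟩
    · -- optimal value is zero
      refine ⟨∅, by simp, by simp, fun y hy => ?_⟩
      have hvx : val E u x = 0 := by
        refine Finset.sum_eq_zero fun e he => ?_
        have hxe : x e = 0 := by
          by_contra hne
          have hmem : e ∈ supp E x := Finset.mem_filter.2 ⟨he, hne⟩
          rw [hsupp] at hmem
          simp at hmem
        rw [hxe, zero_mul]
      have := hopt y hy
      rw [hvx] at this
      simpa using this.trans (by norm_num)
    · set u₀ := u e₀ with hu₀def
      have hu₀ : 0 ≤ u₀ := hu e₀ he₀E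
      set lightN := E.filter (fun e => meets e e₀ ∧ u e ≤ u₀) with hlightdef
      have he₀light : e₀ ∈ lightN :=
        Finset.mem_filter.2 ⟨he₀E, meets_self e₀, le_refl _⟩
      set E' := E \ lightN with hE'def
      have hE'sub : E' ⊆ E := Finset.sdiff_subset
      have he₀notE' : e₀ ∉ E' := fun h => (Finset.mem_sdiff.1 h).2 he₀light
      have hE'card : E'.card ≤ n := by
        have hlt : E'.card < E.card :=
          Finset.card_lt_card ⟨hE'sub, fun hsub => he₀notE' (hsub he₀E)⟩
        omega
      set u' : (V₁ × V₂ × V₃) → ℝ := fun e => if meets e e₀ then u e - u₀ else u e with hu'def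
      have hu' : ∀ e ∈ E', 0 ≤ u' e := by
        intro e he
        obtain ⟨heE, hnl⟩ := Finset.mem_sdiff.1 he
        by_cases hm : meets e e₀
        · have : ¬ (u e ≤ u₀) := fun hle => hnl (Finset.mem_filter.2 ⟨heE, hm, hle⟩)
          simp only [hu'def, hm, if_true]
          linarith [lt_of_not_ge this]
        · simp only [hu'def, hm, if_false]
          exact hu e heE
      obtain ⟨M', hM'sub, hM'match, hM'bd⟩ := ih E' u' hE'card hu'
      -- the key surgery bound : val E u x ≤ val E' u' (restriction of x) + 2 u₀
      set xr : (V₁ × V₂ × V₃) → ℝ := fun e => if e ∈ E' then x e else 0 with hxrdef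
      have hxrF : Feas E' xr := by
        refine ⟨fun e he => by simp [hxrdef, he], fun e he => ?_, fun w => ?_⟩
        · simp only [hxrdef, he, if_true]
          exact hxF.2.1 e (hE'sub he)
        · have h1 : ∑ e ∈ star E' w, xr e = ∑ e ∈ star E' w, x e := by
            refine Finset.sum_congr rfl fun e he => ?_
            simp [hxrdef, (Finset.mem_filter.1 he).1]
          rw [h1]
          have h2 : star E' w ⊆ star E w :=
            Finset.filter_subset_filter _ hE'sub
          have h3 : ∑ e ∈ star E' w, x e ≤ ∑ e ∈ star E w, x e :=
            Finset.sum_le_sum_of_subset_of_nonneg h2 fun e he _ =>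
              hxF.2.1 e (Finset.mem_filter.1 he).1
          exact h3.trans (hxF.2.2 w)
      have hvalxr : val E' u' xr = ∑ e ∈ E', x e * u' e := by
        refine Finset.sum_congr rfl fun e he => ?_
        simp [hxrdef, he]
      -- decomposition of val E u x
      have hlsub : lightN ⊆ E := Finset.filter_subset _ _
      have hsplit : ∑ e ∈ E', x e * u e + ∑ e ∈ lightN, x e * u e = val E u x :=
        Finset.sum_sdiff hlsub
      have h2 : ∑ e ∈ E', x e * u e
          = ∑ e ∈ E', x e * u' e + u₀ * ∑ e ∈ E'.filter (fun e => meets e e₀), x e := by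
        rw [Finset.mul_sum, Finset.sum_filter, ← Finset.sum_add_distrib]
        refine Finset.sum_congr rfl fun e _ => ?_
        by_cases hm : meets e e₀
        · simp only [hu'def, hm, if_true]; ring
        · simp only [hu'def, hm, if_false]; ring
      have h3 : ∑ e ∈ lightN, x e * u e ≤ u₀ * ∑ e ∈ lightN, x e := by
        rw [Finset.mul_sum]
        refine Finset.sum_le_sum fun e he => ?_
        obtain ⟨heE, _, hle⟩ := Finset.mem_filter.1 he
        have hx0 := hxF.2.1 e heE
        calc x e * u e ≤ x e * u₀ := mul_le_mul_of_nonneg_left hle hx0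
        _ = u₀ * x e := mul_comm _ _
      have hlsub2 : lightN ⊆ E.filter (fun e => meets e e₀) := by
        intro e he
        obtain ⟨heE, hm, _⟩ := Finset.mem_filter.1 he
        exact Finset.mem_filter.2 ⟨heE, hm⟩
      have hE'filter : E'.filter (fun e => meets e e₀)
          = (E.filter (fun e => meets e e₀)) \ lightN := by
        ext e
        simp only [hE'def, Finset.mem_filter, Finset.mem_sdiff]
        tauto
      have h4 : ∑ e ∈ E'.filter (fun e => meets e e₀), x e + ∑ e ∈ lightN, x e
          = ∑ e ∈ E.filter (fun e => meets e e₀), x e := by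
        rw [hE'filter]
        exact Finset.sum_sdiff hlsub2
      -- the star bound
      have h5 : ∑ e ∈ E.filter (fun e => meets e e₀), x e ≤ 3 - 2 * x e₀ := by
        set S₁ := star E (Sum.inl e₀.1) with hS₁
        set S₂ := star E (Sum.inr (Sum.inl e₀.2.1)) with hS₂
        set S₃ := star E (Sum.inr (Sum.inr e₀.2.2)) with hS₃
        have hxnn : ∀ e ∈ E, 0 ≤ x e := hxF.2.1
        have hU : E.filter (fun e => meets e e₀) = S₁ ∪ (S₂ ∪ S₃) := by
          ext e
          simp only [hS₁, hS₂, hS₃, star, Finset.mem_union, Finset.mem_filter, meets, inc]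
          exact (@Finset.mem_filter _ _ (fun _ => Classical.propDecidable _) _ _).trans (by tauto)
        have he₀S₁ : e₀ ∈ S₁ := Finset.mem_filter.2 ⟨he₀E, rfl⟩
        have he₀S₂ : e₀ ∈ S₂ := Finset.mem_filter.2 ⟨he₀E, rfl⟩
        have he₀S₃ : e₀ ∈ S₃ := Finset.mem_filter.2 ⟨he₀E, rfl⟩
        have hsum1 : ∑ e ∈ S₁ ∪ (S₂ ∪ S₃), x e
            = ∑ e ∈ S₁, x e + ∑ e ∈ (S₂ ∪ S₃) \ S₁, x e := by
          rw [← Finset.sum_union Finset.disjoint_sdiff, Finset.union_sdiff_self_eq_union]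
        have hsdistrib : (S₂ ∪ S₃) \ S₁ = (S₂ \ S₁) ∪ (S₃ \ S₁) :=
          Finset.union_sdiff_distrib _ _ _
        have hsum2 : ∑ e ∈ (S₂ \ S₁) ∪ (S₃ \ S₁), x e
            ≤ ∑ e ∈ S₂ \ S₁, x e + ∑ e ∈ S₃ \ S₁, x e := by
          have h8 : ∑ e ∈ (S₂ \ S₁) ∪ (S₃ \ S₁), x e
              = ∑ e ∈ S₂ \ S₁, x e + ∑ e ∈ (S₃ \ S₁) \ (S₂ \ S₁), x e := by
            rw [← Finset.sum_union Finset.disjoint_sdiff, Finset.union_sdiff_self_eq_union]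
          have h9 : ∑ e ∈ (S₃ \ S₁) \ (S₂ \ S₁), x e ≤ ∑ e ∈ S₃ \ S₁, x e := by
            refine Finset.sum_le_sum_of_subset_of_nonneg Finset.sdiff_subset
              fun e he _ => hxnn e ?_
            exact (Finset.filter_subset _ _) (Finset.sdiff_subset he)
          linarith
        have herase2 : ∑ e ∈ S₂ \ S₁, x e ≤ ∑ e ∈ S₂, x e - x e₀ := by
          have hsub : S₂ \ S₁ ⊆ S₂.erase e₀ := by
            intro e he
            obtain ⟨h2, h1⟩ := Finset.mem_sdiff.1 he
            exact Finset.mem_erase.2 ⟨fun heq => h1 (heq ▸ he₀S₁), h2⟩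
          have h6 : ∑ e ∈ S₂ \ S₁, x e ≤ ∑ e ∈ S₂.erase e₀, x e :=
            Finset.sum_le_sum_of_subset_of_nonneg hsub fun e he _ =>
              hxnn e (Finset.mem_of_mem_erase he |> (Finset.filter_subset _ _))
          have h7 : ∑ e ∈ S₂.erase e₀, x e + x e₀ = ∑ e ∈ S₂, x e :=
            Finset.sum_erase_add _ _ he₀S₂
          linarith
        have herase3 : ∑ e ∈ S₃ \ S₁, x e ≤ ∑ e ∈ S₃, x e - x e₀ := by
          have hsub : S₃ \ S₁ ⊆ S₃.erase e₀ := by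
            intro e he
            obtain ⟨h2, h1⟩ := Finset.mem_sdiff.1 he
            exact Finset.mem_erase.2 ⟨fun heq => h1 (heq ▸ he₀S₁), h2⟩
          have h6 : ∑ e ∈ S₃ \ S₁, x e ≤ ∑ e ∈ S₃.erase e₀, x e :=
            Finset.sum_le_sum_of_subset_of_nonneg hsub fun e he _ =>
              hxnn e (Finset.mem_of_mem_erase he |> (Finset.filter_subset _ _))
          have h7 : ∑ e ∈ S₃.erase e₀, x e + x e₀ = ∑ e ∈ S₃, x e :=
            Finset.sum_erase_add _ _ he₀S₃
          linarith
        have hb1 := hxF.2.2 (Sum.inl e₀.1)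
        have hb2 := hxF.2.2 (Sum.inr (Sum.inl e₀.2.1))
        have hb3 := hxF.2.2 (Sum.inr (Sum.inr e₀.2.2))
        rw [hU, hsum1]
        rw [hsdistrib]
        have := hsum2
        linarith
      -- combine surgery
      have hsurg : val E u x ≤ ∑ e ∈ E', x e * u' e + 2 * u₀ := by
        have hkey : u₀ * ∑ e ∈ E'.filter (fun e => meets e e₀), x e
            + u₀ * ∑ e ∈ lightN, x e
            = u₀ * ∑ e ∈ E.filter (fun e => meets e e₀), x e := by
          rw [← mul_add, h4]
        have hfin : u₀ * ∑ e ∈ E.filter (fun e => meets e e₀), x e ≤ u₀ * (3 - 2 * x e₀) :=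
          mul_le_mul_of_nonneg_left h5 hu₀
        have hx₀2 : u₀ * (3 - 2 * x e₀) ≤ 2 * u₀ := by nlinarith
        linarith [hsplit, h2, h3]
      -- apply induction bound to xr
      have hxrbd := hM'bd xr hxrF
      rw [hvalxr] at hxrbd
      by_cases hmeet : ∃ m ∈ M', meets m e₀
      · obtain ⟨m, hmM', hm⟩ := hmeet
        refine ⟨M', fun e he => hE'sub (hM'sub he), hM'match, fun y hy => ?_⟩
        have hdiff : ∑ e ∈ M', u e - ∑ e ∈ M', u' e
            = ∑ e ∈ M'.filter (fun e => meets e e₀), u₀ := by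
          rw [← Finset.sum_sub_distrib, Finset.sum_filter]
          refine Finset.sum_congr rfl fun e _ => ?_
          by_cases hme : meets e e₀
          · simp only [hu'def, hme, if_true]; ring
          · simp only [hu'def, hme, if_false]; ring
        have hcard1 : 1 ≤ (M'.filter (fun e => meets e e₀)).card :=
          Finset.card_pos.2 ⟨m, Finset.mem_filter.2 ⟨hmM', hm⟩⟩
        have hge : u₀ ≤ ∑ e ∈ M', u e - ∑ e ∈ M', u' e := by
          rw [hdiff, Finset.sum_const, nsmul_eq_mul]
          have hc : (1:ℝ) ≤ ((M'.filter (fun e => meets e e₀)).card : ℝ) := by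
            exact_mod_cast hcard1
          nlinarith
        have := hopt y hy
        linarith [hsurg, hxrbd]
      · push_neg at hmeet
        have he₀notM' : e₀ ∉ M' := fun h => hmeet e₀ h (meets_self e₀)
        refine ⟨insert e₀ M', ?_, ?_, fun y hy => ?_⟩
        · exact Finset.insert_subset he₀E (fun e he => hE'sub (hM'sub he))
        · intro e he e' he' hne
          rcases Finset.mem_insert.1 he with rfl | heM
          · rcases Finset.mem_insert.1 he' with rfl | he'M
            · exact absurd rfl hne
            · have h := hmeet e' he'M
              simp only [meets, not_or] at h
              exact ⟨fun hh => h.1 hh.symm, fun hh => h.2.1 hh.symm, fun hh => h.2.2 hh.symm⟩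
          · rcases Finset.mem_insert.1 he' with rfl | he'M
            · have h := hmeet e heM
              simp only [meets, not_or] at h
              exact ⟨h.1, h.2.1, h.2.2⟩
            · exact hM'match e heM e' he'M hne
        · have hsum : ∑ e ∈ insert e₀ M', u e = u₀ + ∑ e ∈ M', u e :=
            Finset.sum_insert he₀notM'
          have hle : ∑ e ∈ M', u' e ≤ ∑ e ∈ M', u e := by
            refine Finset.sum_le_sum fun e _ => ?_
            by_cases hme : meets e e₀
            · simp only [hu'def, hme, if_true]; linarith
            · simp only [hu'def, hme, if_false]
              exact le_refl _
          have := hopt y hy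
          rw [hsum]
          linarith [hsurg, hxrbd]

end Chunk5

end TriMatch

/-- Let `E ⊆ V₁ × V₂ × V₃` be the (finite) edge set of a tripartite 3-uniform hypergraph
with nonnegative edge weights `u`.  Then there exists a matching `M ⊆ E` (a set of edges
pairwise differing in all three coordinates) whose total weight is at least half of the
value `Σ_{e ∈ E} F e * u e` of every fractional matching `F` (i.e. `F ≥ 0` on `E` and the
total fraction of edges incident to any vertex is at most `1`).  In particular the maximum
weight of an integral matching is at least half the optimum of the fractional matching LP. -/
theorem half_integrality_tripartite_matching {V₁ V₂ V₃ : Type*}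
    [DecidableEq V₁] [DecidableEq V₂] [DecidableEq V₃]
    (E : Finset (V₁ × V₂ × V₃)) (u : V₁ × V₂ × V₃ → ℝ)
    (hu : ∀ e ∈ E, 0 ≤ u e) :
    ∃ M : Finset (V₁ × V₂ × V₃), M ⊆ E ∧
      (∀ e ∈ M, ∀ e' ∈ M, e ≠ e' →
        e.1 ≠ e'.1 ∧ e.2.1 ≠ e'.2.1 ∧ e.2.2 ≠ e'.2.2) ∧
      ∀ F : V₁ × V₂ × V₃ → ℝ,
        (∀ e ∈ E, 0 ≤ F e) →
        (∀ v₁ : V₁, ∑ e ∈ E.filter (fun e => e.1 = v₁), F e ≤ 1) →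
        (∀ v₂ : V₂, ∑ e ∈ E.filter (fun e => e.2.1 = v₂), F e ≤ 1) →
        (∀ v₃ : V₃, ∑ e ∈ E.filter (fun e => e.2.2 = v₃), F e ≤ 1) →
        (1 / 2) * ∑ e ∈ E, F e * u e ≤ ∑ e ∈ M, u e := by
  classical
  obtain ⟨M, hMsub, hMmatch, hMbd⟩ := TriMatch.main_aux E.card E u (le_refl _) hu
  refine ⟨M, hMsub, hMmatch, ?_⟩
  intro F hF h1 h2 h3
  set Ft : V₁ × V₂ × V₃ → ℝ := fun e => if e ∈ E then F e else 0 with hFt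
  have hFeas : TriMatch.Feas E Ft := by
    refine ⟨fun e he => by simp [hFt, he], fun e he => ?_, fun w => ?_⟩
    · simp only [hFt, he, if_true]
      exact hF e he
    · have hs : ∑ e ∈ TriMatch.star E w, Ft e = ∑ e ∈ TriMatch.star E w, F e :=
        Finset.sum_congr rfl fun e he => by
          simp [hFt, (Finset.mem_filter.1 he).1]
      rw [hs]
      rcases w with a | b | c
      · have heq : TriMatch.star E (Sum.inl a) = E.filter (fun e => e.1 = a) :=
          Finset.filter_congr fun e _ => Iff.rfl
        rw [heq]; exact h1 a
      · have heq : TriMatch.star E (Sum.inr (Sum.inl b)) = E.filter (fun e => e.2.1 = b) :=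
          Finset.filter_congr fun e _ => Iff.rfl
        rw [heq]; exact h2 b
      · have heq : TriMatch.star E (Sum.inr (Sum.inr c)) = E.filter (fun e => e.2.2 = c) :=
          Finset.filter_congr fun e _ => Iff.rfl
        rw [heq]; exact h3 c
  have hval : TriMatch.val E u Ft = ∑ e ∈ E, F e * u e :=
    Finset.sum_congr rfl fun e he => by simp [hFt, he]
  have hbd := hMbd Ft hFeas
  rw [hval] at hbd
  linarith
end

section
/- For every MEC instance and every discretization constant φ > 1, the optimal values of the deadline-constrained task offloading and resource allocation problem DTRP and of its discretized linear-programming relaxation RDP satisfy ((1−α)/φ)·OPT_DTRP ≤ OPT_RDP. -/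
open scoped BigOperators

/-- An MEC instance: finite sets of tasks `I`, access points `J` and servers `K`; task
parameters (size `s`, per-bit demand `eta`, deadline `dl`, local energy `El`, accessible
APs `acc`); channel gains `G`, noise power `sigma2`, resource units `bu, cu, pu`; integer
capacities `bcap, ccap ≥ 1`; backhaul delays `delay ≥ 0`; maximum offloading power
`pmax ≥ 1`; and a resource allocation bound `0 ≤ alpha < 1` with `⌊alpha * bcap j⌋ ≥ 1` and
`⌊alpha * ccap k⌋ ≥ 1`. -/
structure MECInstance where
  I : Type
  J : Type
  K : Type
  [fI : Fintype I]
  [fJ : Fintype J]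
  [fK : Fintype K]
  s : I → ℝ
  eta : I → ℝ
  dl : I → ℝ
  El : I → ℝ
  acc : I → J → Prop
  G : I → J → ℝ
  sigma2 : ℝ
  bu : ℝ
  cu : ℝ
  pu : ℝ
  bcap : J → ℤ
  ccap : K → ℤ
  delay : J → K → ℝ
  pmax : ℤ
  alpha : ℝ
  hs : ∀ i, 0 < s i
  heta : ∀ i, 0 < eta i
  hdl : ∀ i, 0 < dl i
  hEl : ∀ i, 0 < El i
  hG : ∀ i j, 0 < G i j
  hsigma2 : 0 < sigma2
  hbu : 0 < bu
  hcu : 0 < cu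
  hpu : 0 < pu
  hbcap : ∀ j, 1 ≤ bcap j
  hccap : ∀ k, 1 ≤ ccap k
  hdelay : ∀ j k, 0 ≤ delay j k
  hpmax : 1 ≤ pmax
  halpha0 : 0 ≤ alpha
  halpha1 : alpha < 1
  halphab : ∀ j, 1 ≤ ⌊alpha * (bcap j : ℝ)⌋
  halphac : ∀ k, 1 ≤ ⌊alpha * (ccap k : ℝ)⌋

attribute [instance] MECInstance.fI MECInstance.fJ MECInstance.fK

namespace MECInstance

variable (P : MECInstance)

/-- Offloading time `t^o_{ij} = s_i / (b_{ij}·b̄·log₂(1 + p_{ij}·p̄·G_{ij}/σ²))`. -/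
noncomputable def toff (i : P.I) (j : P.J) (b p : ℤ) : ℝ :=
  P.s i / ((b : ℝ) * P.bu * Real.logb 2 (1 + (p : ℝ) * P.pu * P.G i j / P.sigma2))

/-- Saved energy `E_{ij} = E^l_i − p_{ij}·p̄·t^o_{ij}`. -/
noncomputable def Esaved (i : P.I) (j : P.J) (b p : ℤ) : ℝ :=
  P.El i - (p : ℝ) * P.pu * P.toff i j b p

/-- Feasibility of a DTRP solution `(x, y, b, c, p)`. -/
def DTRPFeasible (x : P.I → P.J → ℤ) (y : P.I → P.K → ℤ)
    (b : P.I → P.J → ℤ) (c : P.I → P.K → ℤ) (p : P.I → P.J → ℤ) : Prop :=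
  (∀ i j, x i j = 0 ∨ x i j = 1) ∧
  (∀ i k, y i k = 0 ∨ y i k = 1) ∧
  (∀ i j, ¬ P.acc i j → x i j = 0) ∧
  (∀ i, ∑ j, x i j ≤ 1) ∧
  (∀ i, ∑ k, y i k ≤ 1) ∧
  (∀ i j, 0 ≤ b i j) ∧ (∀ i k, 0 ≤ c i k) ∧ (∀ i j, 0 ≤ p i j) ∧
  (∀ j, ∑ i, b i j ≤ P.bcap j) ∧
  (∀ k, ∑ i, c i k ≤ P.ccap k) ∧
  (∀ i j, (b i j : ℝ) ≤ P.alpha * (P.bcap j : ℝ)) ∧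
  (∀ i k, (c i k : ℝ) ≤ P.alpha * (P.ccap k : ℝ)) ∧
  (∀ i j, p i j ≤ P.pmax) ∧
  (∀ i j, x i j = 1 → 1 ≤ b i j) ∧
  (∀ i j, x i j = 1 → 1 ≤ p i j) ∧
  (∀ i k, y i k = 1 → 1 ≤ c i k) ∧
  (∀ i, (∑ j, (x i j : ℝ) * P.toff i j (b i j) (p i j))
      + (∑ j, ∑ k, (x i j : ℝ) * (y i k : ℝ) * P.delay j k)
      + (∑ k, (y i k : ℝ) * (P.s i * P.eta i / ((c i k : ℝ) * P.cu))) ≤ P.dl i)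

/-- DTRP objective: total saved energy `Σ_{i,j,k} x_{ij}·y_{ik}·E_{ij}`. -/
noncomputable def DTRPObj (x : P.I → P.J → ℤ) (y : P.I → P.K → ℤ)
    (b : P.I → P.J → ℤ) (p : P.I → P.J → ℤ) : ℝ :=
  ∑ i, ∑ j, ∑ k, (x i j : ℝ) * (y i k : ℝ) * P.Esaved i j (b i j) (p i j)

/-- Optimal value of DTRP (supremum of objectives of feasible solutions). -/
noncomputable def optDTRP : ℝ :=
  sSup { v : ℝ | ∃ x y b c p, P.DTRPFeasible x y b c p ∧ v = P.DTRPObj x y b p }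

/-- `π_j = ⌈log_φ(α·b_j)⌉` (a nonnegative integer). -/
noncomputable def piJ (φ : ℝ) (j : P.J) : ℕ :=
  (⌈Real.logb φ (P.alpha * (P.bcap j : ℝ))⌉).toNat

/-- `λ_k = ⌈log_φ(α·c_k)⌉` (a nonnegative integer). -/
noncomputable def lamK (φ : ℝ) (k : P.K) : ℕ :=
  (⌈Real.logb φ (P.alpha * (P.ccap k : ℝ))⌉).toNat

/-- Discretized bandwidth levels: `B_m = ⌊φ^m⌋` for `m < π_j`, `B_{π_j} = ⌊α·b_j⌋`. -/
noncomputable def Blev (φ : ℝ) (j : P.J) (m : ℕ) : ℤ :=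
  if m < P.piJ φ j then ⌊φ ^ m⌋ else ⌊P.alpha * (P.bcap j : ℝ)⌋

/-- Discretized computation levels: `C_n = ⌊φ^n⌋` for `n < λ_k`, `C_{λ_k} = ⌊α·c_k⌋`. -/
noncomputable def Clev (φ : ℝ) (k : P.K) (n : ℕ) : ℤ :=
  if n < P.lamK φ k then ⌊φ ^ n⌋ else ⌊P.alpha * (P.ccap k : ℝ)⌋

/-- Allowed offloading time `T_{ijmkn} = d_i − δ_{jk} − s_i·η_i/(C_n·c̄)`. -/
noncomputable def Tcomb (φ : ℝ) (i : P.I) (j : P.J) (k : P.K) (n : ℕ) : ℝ :=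
  P.dl i - P.delay j k - P.s i * P.eta i / ((P.Clev φ k n : ℝ) * P.cu)

/-- Required power `P_{ijmkn} = (σ²/(p̄·G_{ij}))·(2^{s_i/(T·B_m·b̄)} − 1)`. -/
noncomputable def Pcomb (φ : ℝ) (i : P.I) (j : P.J) (m : ℕ) (k : P.K) (n : ℕ) : ℝ :=
  (P.sigma2 / (P.pu * P.G i j)) *
    ((2 : ℝ) ^ (P.s i / (P.Tcomb φ i j k n * (P.Blev φ j m : ℝ) * P.bu)) - 1)

/-- Saved energy `E_{ijmkn} = E^l_i − P_{ijmkn}·p̄·T_{ijmkn}` of a combination. -/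
noncomputable def Ecomb (φ : ℝ) (i : P.I) (j : P.J) (m : ℕ) (k : P.K) (n : ℕ) : ℝ :=
  P.El i - P.Pcomb φ i j m k n * P.pu * P.Tcomb φ i j k n

/-- Feasibility of a combination `⟨i,j,m,k,n⟩`. -/
noncomputable def FeasComb (φ : ℝ) (i : P.I) (j : P.J) (m : ℕ) (k : P.K) (n : ℕ) : Prop :=
  P.acc i j ∧ m ≤ P.piJ φ j ∧ n ≤ P.lamK φ k ∧
  0 < P.Tcomb φ i j k n ∧ P.Pcomb φ i j m k n ≤ (P.pmax : ℝ) ∧ 0 < P.Ecomb φ i j m k n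

/-- RDP objective `Σ_{⟨i,j,m,k,n⟩} z_{ijmkn}·E_{ijmkn}`. -/
noncomputable def RDPObj (φ : ℝ) (z : P.I → P.J → ℕ → P.K → ℕ → ℝ) : ℝ :=
  ∑ i, ∑ j, ∑ m ∈ Finset.range (P.piJ φ j + 1), ∑ k, ∑ n ∈ Finset.range (P.lamK φ k + 1),
    z i j m k n * P.Ecomb φ i j m k n

/-- Feasibility for the LP relaxation RDP: nonnegative `z` supported on feasible
combinations, with `Σ z ≤ 1` per task and discounted capacities `(1−α)·b_j`, `(1−α)·c_k`. -/
noncomputable def RDPFeasible (φ : ℝ) (z : P.I → P.J → ℕ → P.K → ℕ → ℝ) : Prop :=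
  (∀ i j m k n, 0 ≤ z i j m k n) ∧
  (∀ i j m k n, ¬ P.FeasComb φ i j m k n → z i j m k n = 0) ∧
  (∀ i, ∑ j, ∑ m ∈ Finset.range (P.piJ φ j + 1), ∑ k, ∑ n ∈ Finset.range (P.lamK φ k + 1),
      z i j m k n ≤ 1) ∧
  (∀ j, ∑ i, ∑ m ∈ Finset.range (P.piJ φ j + 1), ∑ k, ∑ n ∈ Finset.range (P.lamK φ k + 1),
      z i j m k n * (P.Blev φ j m : ℝ) ≤ (1 - P.alpha) * (P.bcap j : ℝ)) ∧
  (∀ k, ∑ i, ∑ j, ∑ m ∈ Finset.range (P.piJ φ j + 1), ∑ n ∈ Finset.range (P.lamK φ k + 1),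
      z i j m k n * (P.Clev φ k n : ℝ) ≤ (1 - P.alpha) * (P.ccap k : ℝ))

/-- Optimal value of RDP. -/
noncomputable def optRDP (φ : ℝ) : ℝ :=
  sSup { v : ℝ | ∃ z, P.RDPFeasible φ z ∧ v = P.RDPObj φ z }

end MECInstance

set_option linter.dupNamespace false


lemma two_rpow_slope {u v : ℝ} (hu : 0 < u) (huv : u ≤ v) :
    v * ((2:ℝ) ^ u - 1) ≤ u * ((2:ℝ) ^ v - 1) := by
  have hv : 0 < v := lt_of_lt_of_le hu huv
  have ht0 : (0:ℝ) ≤ u / v := le_of_lt (div_pos hu hv)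
  have ht1 : u / v ≤ 1 := (div_le_one hv).2 huv
  have hcx := convexOn_exp.2 (Set.mem_univ (0:ℝ)) (Set.mem_univ (v * Real.log 2))
      (by linarith : (0:ℝ) ≤ 1 - u / v) ht0 (by ring)
  have hsm : (1 - u / v) • (0:ℝ) + (u / v) • (v * Real.log 2) = u * Real.log 2 := by
    have hvne : v ≠ 0 := ne_of_gt hv
    field_simp
    rw [smul_eq_mul, smul_eq_mul, mul_zero, zero_add, ← mul_assoc, div_mul_cancel₀ u hvne]
  have he : Real.exp (u * Real.log 2)
      ≤ (1 - u / v) * Real.exp 0 + (u / v) * Real.exp (v * Real.log 2) := by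
    rw [hsm] at hcx
    simpa [smul_eq_mul] using hcx
  have h2u : (2:ℝ) ^ u = Real.exp (u * Real.log 2) := by
    rw [Real.rpow_def_of_pos (by norm_num : (0:ℝ) < 2)]; ring_nf
  have h2v : (2:ℝ) ^ v = Real.exp (v * Real.log 2) := by
    rw [Real.rpow_def_of_pos (by norm_num : (0:ℝ) < 2)]; ring_nf
  rw [h2u, h2v]
  rw [Real.exp_zero] at he
  have := mul_le_mul_of_nonneg_left he (le_of_lt hv)
  have hvne : v ≠ 0 := ne_of_gt hv
  calc v * (Real.exp (u * Real.log 2) - 1)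
      = v * Real.exp (u * Real.log 2) - v := by ring
    _ ≤ v * ((1 - u / v) * 1 + (u / v) * Real.exp (v * Real.log 2)) - v := by linarith
    _ = u * (Real.exp (v * Real.log 2) - 1) := by field_simp; ring

lemma rpow_time_mono {a t T : ℝ} (ha : 0 < a) (ht : 0 < t) (htT : t ≤ T) :
    T * ((2:ℝ) ^ (a / T) - 1) ≤ t * ((2:ℝ) ^ (a / t) - 1) := by
  have hT : 0 < T := lt_of_lt_of_le ht htT
  have hu : 0 < a / T := div_pos ha hT
  have hv : 0 < a / t := div_pos ha ht
  have huv : a / T ≤ a / t := div_le_div_of_nonneg_left (le_of_lt ha) ht htT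
  have key := two_rpow_slope hu huv
  -- multiply key by (t*T/a)
  have hfac : 0 < t * T / a := div_pos (mul_pos ht hT) ha
  have := mul_le_mul_of_nonneg_left key (le_of_lt hfac)
  have h1 : t * T / a * (a / t * ((2:ℝ) ^ (a / T) - 1)) = T * ((2:ℝ) ^ (a / T) - 1) := by
    field_simp
  have h2 : t * T / a * (a / T * ((2:ℝ) ^ (a / t) - 1)) = t * ((2:ℝ) ^ (a / t) - 1) := by
    field_simp
  rwa [h1, h2] at this


lemma sum01_unique {α : Type} [Fintype α] (g : α → ℤ)
    (h01 : ∀ a, g a = 0 ∨ g a = 1) (hs : ∑ a, g a ≤ 1)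
    {a₀ a : α} (h1 : g a₀ = 1) (hne : a ≠ a₀) : g a = 0 := by
  classical
  by_contra h
  have ha1 : g a = 1 := (h01 a).resolve_left h
  have hmem : a ∈ (Finset.univ.erase a₀) := Finset.mem_erase.2 ⟨hne, Finset.mem_univ a⟩
  have hle : g a ≤ ∑ x ∈ Finset.univ.erase a₀, g x :=
    Finset.single_le_sum (fun x _ => by rcases h01 x with h | h <;> omega) hmem
  have hsum : g a₀ + ∑ x ∈ Finset.univ.erase a₀, g x = ∑ x, g x :=
    Finset.add_sum_erase _ _ (Finset.mem_univ a₀)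
  omega

lemma level_exists {φ A : ℝ} (hφ : 1 < φ) (hA : 1 ≤ ⌊A⌋) {bv : ℤ} (hb : 1 ≤ bv)
    (hbA : (bv:ℝ) ≤ A) :
    ∃ m : ℕ, m ≤ (⌈Real.logb φ A⌉).toNat ∧
      bv ≤ (if m < (⌈Real.logb φ A⌉).toNat then ⌊φ ^ m⌋ else ⌊A⌋) ∧
      (((if m < (⌈Real.logb φ A⌉).toNat then ⌊φ ^ m⌋ else ⌊A⌋) : ℤ) : ℝ) ≤ φ * (bv : ℝ) := by
  set π := (⌈Real.logb φ A⌉).toNat with hπ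
  have hφ0 : (0:ℝ) < φ := lt_trans one_pos hφ
  have hA1 : (1:ℝ) ≤ A := le_trans (by exact_mod_cast hA) (Int.floor_le A)
  have hA0 : (0:ℝ) < A := lt_of_lt_of_le one_pos hA1
  have hbvA : bv ≤ ⌊A⌋ := Int.le_floor.2 hbA
  have hbR : (1:ℝ) ≤ (bv:ℝ) := by exact_mod_cast hb
  set lev : ℕ → ℤ := fun m => if m < π then ⌊φ ^ m⌋ else ⌊A⌋ with hlev
  have hex : ∃ m, bv ≤ lev m := ⟨π, by simp [hlev, hbvA]⟩
  classical
  refine ⟨Nat.find hex, ?_, Nat.find_spec hex, ?_⟩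
  · by_contra hgt
    push_neg at hgt
    exact absurd (Nat.find_le (by simp [hlev, hbvA] : bv ≤ lev π)) (not_le.2 hgt)
  · have hMle : Nat.find hex ≤ π := Nat.find_le (by simp [hlev, hbvA] : bv ≤ lev π)
    -- A ≤ φ ^ π
    have hAπ : A ≤ φ ^ π := by
      have hlogb : Real.logb φ A ≤ (π : ℝ) := by
        have h1 : Real.logb φ A ≤ (⌈Real.logb φ A⌉ : ℝ) := Int.le_ceil _
        have h2 : (⌈Real.logb φ A⌉ : ℝ) ≤ ((π : ℤ) : ℝ) := by
          exact_mod_cast Int.self_le_toNat _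
        simpa using le_trans h1 h2
      calc A = φ ^ Real.logb φ A := (Real.rpow_logb hφ0 (ne_of_gt hφ) hA0).symm
        _ ≤ φ ^ (π:ℝ) := Real.rpow_le_rpow_of_exponent_le (le_of_lt hφ) hlogb
        _ = φ ^ π := by rw [Real.rpow_natCast]
    rcases Nat.eq_zero_or_pos (Nat.find hex) with h0 | hpos
    · rw [h0]
      by_cases hπ0 : 0 < π
      · rw [if_pos hπ0]
        have h1 : (⌊φ ^ (0:ℕ)⌋ : ℝ) = 1 := by norm_num
        rw [h1]
        nlinarith
      · have hπe : π = 0 := by omega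
        rw [if_neg hπ0]
        have hfl : ((⌊A⌋:ℤ):ℝ) ≤ A := Int.floor_le A
        have hAφ : A ≤ φ ^ (0:ℕ) := by rw [← hπe]; exact hAπ
        simp only [pow_zero] at hAφ
        nlinarith
    · obtain ⟨m', hm'⟩ : ∃ m', Nat.find hex = m' + 1 := ⟨Nat.find hex - 1, by omega⟩
      have hmin : ¬ (bv ≤ lev m') := Nat.find_min hex (by omega)
      push_neg at hmin
      have hm'π : m' < π := by omega
      have hlevm' : lev m' = ⌊φ ^ m'⌋ := by simp [hlev, hm'π]
      have hpow : φ ^ m' < (bv : ℝ) := by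
        have h1 : φ ^ m' < (⌊φ ^ m'⌋ : ℝ) + 1 := Int.lt_floor_add_one _
        have h2 : (⌊φ ^ m'⌋ : ℝ) + 1 ≤ (bv : ℝ) := by
          rw [hlevm'] at hmin
          exact_mod_cast hmin
        linarith
      rw [hm']
      by_cases hc : m' + 1 < π
      · rw [if_pos hc]
        have hfl : ((⌊φ ^ (m'+1)⌋:ℤ):ℝ) ≤ φ ^ (m'+1) := Int.floor_le _
        have : φ ^ (m'+1) = φ * φ ^ m' := by ring
        nlinarith
      · have hπ1 : π = m' + 1 := by omega
        rw [if_neg hc]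
        have hfl : ((⌊A⌋:ℤ):ℝ) ≤ A := Int.floor_le A
        have : φ ^ π = φ * φ ^ m' := by rw [hπ1]; ring
        nlinarith

namespace MECInstance

variable (P : MECInstance)

lemma Blev_pos {φ : ℝ} (hφ : 1 < φ) (j : P.J) (m : ℕ) : 1 ≤ P.Blev φ j m := by
  unfold Blev
  by_cases h : m < P.piJ φ j
  · rw [if_pos h]
    have : (1:ℝ) ≤ φ ^ m := one_le_pow₀ (le_of_lt hφ)
    exact Int.le_floor.2 (by exact_mod_cast this)
  · rw [if_neg h]; exact P.halphab j

lemma Clev_pos {φ : ℝ} (hφ : 1 < φ) (k : P.K) (n : ℕ) : 1 ≤ P.Clev φ k n := by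
  unfold Clev
  by_cases h : n < P.lamK φ k
  · rw [if_pos h]
    have : (1:ℝ) ≤ φ ^ n := one_le_pow₀ (le_of_lt hφ)
    exact Int.le_floor.2 (by exact_mod_cast this)
  · rw [if_neg h]; exact P.halphac k

lemma Ecomb_le_El {φ : ℝ} (hφ : 1 < φ) {i : P.I} {j : P.J} {m : ℕ} {k : P.K} {n : ℕ}
    (hT : 0 < P.Tcomb φ i j k n) : P.Ecomb φ i j m k n ≤ P.El i := by
  have hB : (1:ℝ) ≤ (P.Blev φ j m : ℝ) := by exact_mod_cast P.Blev_pos hφ j m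
  have hbu := P.hbu
  have hs := P.hs i
  have he : 0 ≤ P.s i / (P.Tcomb φ i j k n * (P.Blev φ j m : ℝ) * P.bu) :=
    le_of_lt (div_pos hs (by positivity))
  have h2 : (1:ℝ) ≤ (2:ℝ) ^ (P.s i / (P.Tcomb φ i j k n * (P.Blev φ j m : ℝ) * P.bu)) := by
    calc (1:ℝ) = (2:ℝ) ^ (0:ℝ) := (Real.rpow_zero 2).symm
      _ ≤ _ := Real.rpow_le_rpow_of_exponent_le (by norm_num) he
  have hP : 0 ≤ P.Pcomb φ i j m k n := by
    unfold Pcomb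
    have h1 : 0 ≤ P.sigma2 / (P.pu * P.G i j) :=
      le_of_lt (div_pos P.hsigma2 (mul_pos P.hpu (P.hG i j)))
    nlinarith
  have := mul_nonneg (mul_nonneg hP (le_of_lt P.hpu)) (le_of_lt hT)
  unfold Ecomb
  linarith


lemma energy_key {φ : ℝ} (hφ : 1 < φ) {i : P.I} {j : P.J} {k : P.K}
    {bv pv cv : ℤ} {m n : ℕ}
    (hb : 1 ≤ bv) (hp : 1 ≤ pv) (hc : 1 ≤ cv)
    (hdead : P.toff i j bv pv + P.delay j k + P.s i * P.eta i / ((cv:ℝ) * P.cu) ≤ P.dl i)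
    (hB : bv ≤ P.Blev φ j m) (hC : cv ≤ P.Clev φ k n) :
    0 < P.Tcomb φ i j k n ∧ P.Pcomb φ i j m k n ≤ (pv : ℝ) ∧
      P.Esaved i j bv pv ≤ P.Ecomb φ i j m k n := by
  have hs := P.hs i
  have hbu := P.hbu
  have hcu := P.hcu
  have hpu := P.hpu
  have hsig := P.hsigma2
  have hGij := P.hG i j
  have heta := P.heta i
  have hbR : (1:ℝ) ≤ (bv:ℝ) := by exact_mod_cast hb
  have hpR : (1:ℝ) ≤ (pv:ℝ) := by exact_mod_cast hp
  have hcR : (1:ℝ) ≤ (cv:ℝ) := by exact_mod_cast hc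
  have hBR : (bv:ℝ) ≤ (P.Blev φ j m : ℝ) := by exact_mod_cast hB
  have hCR : (cv:ℝ) ≤ (P.Clev φ k n : ℝ) := by exact_mod_cast hC
  set X : ℝ := 1 + (pv:ℝ) * P.pu * P.G i j / P.sigma2 with hXdef
  have hX : 1 < X := by
    have : 0 < (pv:ℝ) * P.pu * P.G i j / P.sigma2 := by positivity
    simp [hXdef]; linarith
  set L : ℝ := Real.logb 2 X with hLdef
  have hL : 0 < L := Real.logb_pos (by norm_num) hX
  set t : ℝ := P.toff i j bv pv with htdef
  have htEq : t = P.s i / ((bv:ℝ) * P.bu * L) := rfl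
  have ht : 0 < t := by
    rw [htEq]
    exact div_pos hs (by positivity)
  have h2L : (2:ℝ) ^ L = X := Real.rpow_logb (by norm_num) (by norm_num) (by linarith)
  set B : ℝ := (P.Blev φ j m : ℝ) with hBdef
  set C : ℝ := (P.Clev φ k n : ℝ) with hCdef
  have hB1 : (1:ℝ) ≤ B := le_trans hbR hBR
  have hC1 : (1:ℝ) ≤ C := le_trans hcR hCR
  set T : ℝ := P.Tcomb φ i j k n with hTdef
  have hTEq : T = P.dl i - P.delay j k - P.s i * P.eta i / (C * P.cu) := rfl
  have hCc : P.s i * P.eta i / (C * P.cu) ≤ P.s i * P.eta i / ((cv:ℝ) * P.cu) := by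
    gcongr <;> positivity
  have htT : t ≤ T := by rw [hTEq]; linarith
  have hT0 : 0 < T := lt_of_lt_of_le ht htT
  refine ⟨hT0, ?_, ?_⟩
  · -- Pcomb ≤ pv
    have hLeq : P.s i / (t * (bv:ℝ) * P.bu) = L := by
      rw [htEq]
      field_simp
      try ring
    have hee : P.s i / (T * B * P.bu) ≤ L := by
      rw [← hLeq]
      gcongr <;> first | exact htT | exact hBR | positivity
    have h2 : (2:ℝ) ^ (P.s i / (T * B * P.bu)) ≤ X := by
      rw [← h2L]
      exact Real.rpow_le_rpow_of_exponent_le (by norm_num) hee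
    have hPEq : P.Pcomb φ i j m k n
        = P.sigma2 / (P.pu * P.G i j) * ((2:ℝ) ^ (P.s i / (T * B * P.bu)) - 1) := rfl
    rw [hPEq]
    have hK : 0 < P.sigma2 / (P.pu * P.G i j) := by positivity
    have : P.sigma2 / (P.pu * P.G i j) * (X - 1) = (pv:ℝ) := by
      rw [hXdef]
      field_simp
      try ring
    nlinarith
  · -- Esaved ≤ Ecomb
    have hLeq : P.s i / (t * (bv:ℝ) * P.bu) = L := by
      rw [htEq]
      field_simp
      try ring
    have ha : 0 < P.s i / ((bv:ℝ) * P.bu) := by positivity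
    have haT : P.s i / ((bv:ℝ) * P.bu) / T = P.s i / (T * (bv:ℝ) * P.bu) := by
      rw [div_div]; congr 1; ring
    have hat : P.s i / ((bv:ℝ) * P.bu) / t = P.s i / (t * (bv:ℝ) * P.bu) := by
      rw [div_div]; congr 1; ring
    have hmono := rpow_time_mono ha ht htT
    rw [haT, hat, hLeq] at hmono
    -- step1 : exponent with B vs bv
    have hee : P.s i / (T * B * P.bu) ≤ P.s i / (T * (bv:ℝ) * P.bu) := by
      gcongr <;> first | exact hBR | positivity
    have h2e : (2:ℝ) ^ (P.s i / (T * B * P.bu)) ≤ (2:ℝ) ^ (P.s i / (T * (bv:ℝ) * P.bu)) :=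
      Real.rpow_le_rpow_of_exponent_le (by norm_num) hee
    have hstep : T * ((2:ℝ) ^ (P.s i / (T * B * P.bu)) - 1) ≤ t * ((2:ℝ) ^ L - 1) :=
      le_trans (mul_le_mul_of_nonneg_left (sub_le_sub_right h2e 1) (le_of_lt hT0)) hmono
    have hPEq : P.Pcomb φ i j m k n
        = P.sigma2 / (P.pu * P.G i j) * ((2:ℝ) ^ (P.s i / (T * B * P.bu)) - 1) := rfl
    have hpvEq : (pv:ℝ) * P.pu * t
        = P.sigma2 / P.G i j * (t * ((2:ℝ) ^ L - 1)) := by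
      rw [h2L, hXdef]
      field_simp
      try ring
    have hEs : P.Esaved i j bv pv = P.El i - (pv:ℝ) * P.pu * t := rfl
    have hEc : P.Ecomb φ i j m k n = P.El i - P.Pcomb φ i j m k n * P.pu * T := rfl
    rw [hEs, hEc, hPEq, hpvEq]
    have hcancel : P.sigma2 / (P.pu * P.G i j) * P.pu = P.sigma2 / P.G i j := by
      field_simp
      try ring
    have hKeq : P.sigma2 / (P.pu * P.G i j) * ((2:ℝ) ^ (P.s i / (T * B * P.bu)) - 1) * P.pu * T
        = P.sigma2 / (P.pu * P.G i j) * P.pu * (T * ((2:ℝ) ^ (P.s i / (T * B * P.bu)) - 1)) := by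
      ring
    rw [hKeq, hcancel]
    have hKpos : (0:ℝ) ≤ P.sigma2 / P.G i j := by positivity
    have hfin := mul_le_mul_of_nonneg_left hstep hKpos
    linarith


end MECInstance

/-- For every MEC instance and every discretization constant `φ > 1`,
`((1 − α)/φ) · OPT_DTRP ≤ OPT_RDP`. -/
theorem rdp_lower_bounds_dtrp (P : MECInstance) (φ : ℝ) (hφ : 1 < φ) :
    ((1 - P.alpha) / φ) * P.optDTRP ≤ P.optRDP φ := by
  classical
  have hφ0 : (0:ℝ) < φ := lt_trans one_pos hφ
  have hα0 := P.halpha0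
  have hα1 := P.halpha1
  set cφ : ℝ := (1 - P.alpha) / φ with hcφdef
  have hcφ0 : 0 < cφ := div_pos (by linarith) hφ0
  have hcφ1 : cφ ≤ 1 := by
    rw [hcφdef, div_le_one hφ0]; linarith
  -- the RDP value set is bounded above
  have hbddR : BddAbove { v : ℝ | ∃ z, P.RDPFeasible φ z ∧ v = P.RDPObj φ z } := by
    refine ⟨∑ i, P.El i, ?_⟩
    rintro v ⟨z, ⟨hz0, hzs, hz1, -, -⟩, rfl⟩
    unfold MECInstance.RDPObj
    refine Finset.sum_le_sum fun i _ => ?_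
    calc (∑ j, ∑ m ∈ Finset.range (P.piJ φ j + 1), ∑ k, ∑ n ∈ Finset.range (P.lamK φ k + 1),
            z i j m k n * P.Ecomb φ i j m k n)
        ≤ ∑ j, ∑ m ∈ Finset.range (P.piJ φ j + 1), ∑ k, ∑ n ∈ Finset.range (P.lamK φ k + 1),
            z i j m k n * P.El i := by
          refine Finset.sum_le_sum fun j _ => Finset.sum_le_sum fun m _ =>
            Finset.sum_le_sum fun k _ => Finset.sum_le_sum fun n _ => ?_
          rcases eq_or_ne (z i j m k n) 0 with h | h
          · simp [h]
          · have hfe : P.FeasComb φ i j m k n := by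
              by_contra hnf
              exact h (hzs i j m k n hnf)
            exact mul_le_mul_of_nonneg_left (P.Ecomb_le_El hφ hfe.2.2.2.1) (hz0 i j m k n)
      _ = (∑ j, ∑ m ∈ Finset.range (P.piJ φ j + 1), ∑ k, ∑ n ∈ Finset.range (P.lamK φ k + 1),
            z i j m k n) * P.El i := by
          simp only [Finset.sum_mul]
      _ ≤ P.El i := mul_le_of_le_one_left (le_of_lt (P.hEl i)) (hz1 i)
  -- 0 is an RDP value
  have h0R : (0:ℝ) ∈ { v : ℝ | ∃ z, P.RDPFeasible φ z ∧ v = P.RDPObj φ z } := by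
    refine ⟨fun _ _ _ _ _ => 0, ⟨fun _ _ _ _ _ => le_rfl, fun _ _ _ _ _ _ => rfl, ?_, ?_, ?_⟩, ?_⟩
    · intro i; simp
    · intro j
      simp only [zero_mul, Finset.sum_const_zero]
      have hb : (0:ℝ) ≤ (P.bcap j : ℝ) := by
        have := P.hbcap j; exact_mod_cast le_trans zero_le_one this
      nlinarith
    · intro k
      simp only [zero_mul, Finset.sum_const_zero]
      have hb : (0:ℝ) ≤ (P.ccap k : ℝ) := by
        have := P.hccap k; exact_mod_cast le_trans zero_le_one this
      nlinarith
    · simp [MECInstance.RDPObj]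
  have hoptR0 : 0 ≤ P.optRDP φ := le_csSup hbddR h0R
  -- main step
  have key : P.optDTRP ≤ P.optRDP φ / cφ := by
    unfold MECInstance.optDTRP
    refine Real.sSup_le ?_ (div_nonneg hoptR0 (le_of_lt hcφ0))
    rintro v ⟨x, y, b, c, p, hfeas, rfl⟩
    rw [le_div_iff₀ hcφ0, mul_comm]
    -- construction of a feasible RDP solution from the DTRP solution
    obtain ⟨hx01, hy01, hacc, hxsum, hysum, hbnn, hcnn, hpnn, hbcapS, hccapS, hbal, hcal,
      hppm, hxb, hxp, hyc, hdead⟩ := hfeas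
    have hxR01 : ∀ i j, (0:ℝ) ≤ (x i j : ℝ) ∧ (x i j : ℝ) ≤ 1 := by
      intro i j; rcases hx01 i j with h | h <;> simp [h]
    have hyR01 : ∀ i k, (0:ℝ) ≤ (y i k : ℝ) ∧ (y i k : ℝ) ≤ 1 := by
      intro i k; rcases hy01 i k with h | h <;> simp [h]
    -- level choices
    have hMex : ∀ i j, x i j = 1 → ∃ m, m ≤ P.piJ φ j ∧ b i j ≤ P.Blev φ j m ∧
        (P.Blev φ j m : ℝ) ≤ φ * (b i j : ℝ) := by
      intro i j hx1
      exact level_exists hφ (P.halphab j) (hxb i j hx1) (hbal i j)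
    have hNex : ∀ i k, y i k = 1 → ∃ n, n ≤ P.lamK φ k ∧ c i k ≤ P.Clev φ k n ∧
        (P.Clev φ k n : ℝ) ≤ φ * (c i k : ℝ) := by
      intro i k hy1
      exact level_exists hφ (P.halphac k) (hyc i k hy1) (hcal i k)
    set M : P.I → P.J → ℕ := fun i j => if h : x i j = 1 then (hMex i j h).choose else 0
      with hMdef
    set N : P.I → P.K → ℕ := fun i k => if h : y i k = 1 then (hNex i k h).choose else 0
      with hNdef
    have hMspec : ∀ i j, x i j = 1 → M i j ≤ P.piJ φ j ∧ b i j ≤ P.Blev φ j (M i j) ∧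
        (P.Blev φ j (M i j) : ℝ) ≤ φ * (b i j : ℝ) := by
      intro i j h
      simp only [hMdef, dif_pos h]
      exact (hMex i j h).choose_spec
    have hNspec : ∀ i k, y i k = 1 → N i k ≤ P.lamK φ k ∧ c i k ≤ P.Clev φ k (N i k) ∧
        (P.Clev φ k (N i k) : ℝ) ≤ φ * (c i k : ℝ) := by
      intro i k h
      simp only [hNdef, dif_pos h]
      exact (hNex i k h).choose_spec
    set z : P.I → P.J → ℕ → P.K → ℕ → ℝ := fun i j m k n =>
      if (x i j = 1 ∧ y i k = 1 ∧ 0 < P.Esaved i j (b i j) (p i j)) ∧ m = M i j ∧ n = N i k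
      then cφ else 0 with hzdef
    have hz : ∀ i j m k n, z i j m k n =
        if (x i j = 1 ∧ y i k = 1 ∧ 0 < P.Esaved i j (b i j) (p i j)) ∧ m = M i j ∧ n = N i k
        then cφ else 0 := fun _ _ _ _ _ => rfl
    -- collapsed deadline constraint
    have hdead' : ∀ i j k, x i j = 1 → y i k = 1 →
        P.toff i j (b i j) (p i j) + P.delay j k +
          P.s i * P.eta i / ((c i k : ℝ) * P.cu) ≤ P.dl i := by
      intro i j k hx1 hy1
      have hd := hdead i
      have e1 : (∑ j', (x i j' : ℝ) * P.toff i j' (b i j') (p i j'))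
          = P.toff i j (b i j) (p i j) := by
        rw [Finset.sum_eq_single_of_mem j (Finset.mem_univ j)]
        · rw [hx1]; simp
        · intro j' _ hne
          rw [sum01_unique (x i) (hx01 i) (hxsum i) hx1 hne]; simp
      have e2 : (∑ j', ∑ k', (x i j' : ℝ) * (y i k' : ℝ) * P.delay j' k') = P.delay j k := by
        rw [Finset.sum_eq_single_of_mem j (Finset.mem_univ j)]
        · rw [Finset.sum_eq_single_of_mem k (Finset.mem_univ k)]
          · rw [hx1, hy1]; simp
          · intro k' _ hne
            rw [sum01_unique (y i) (hy01 i) (hysum i) hy1 hne]; simp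
        · intro j' _ hne
          rw [sum01_unique (x i) (hx01 i) (hxsum i) hx1 hne]
          simp
      have e3 : (∑ k', (y i k' : ℝ) * (P.s i * P.eta i / ((c i k' : ℝ) * P.cu)))
          = P.s i * P.eta i / ((c i k : ℝ) * P.cu) := by
        rw [Finset.sum_eq_single_of_mem k (Finset.mem_univ k)]
        · rw [hy1]; simp
        · intro k' _ hne
          rw [sum01_unique (y i) (hy01 i) (hysum i) hy1 hne]; simp
      rw [e1, e2, e3] at hd
      exact hd
    -- energy facts for good triples
    have hkey : ∀ i j k, x i j = 1 → y i k = 1 →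
        0 < P.Tcomb φ i j k (N i k) ∧ P.Pcomb φ i j (M i j) k (N i k) ≤ (p i j : ℝ) ∧
          P.Esaved i j (b i j) (p i j) ≤ P.Ecomb φ i j (M i j) k (N i k) := by
      intro i j k hx1 hy1
      exact P.energy_key hφ (hxb i j hx1) (hxp i j hx1) (hyc i k hy1)
        (hdead' i j k hx1 hy1) (hMspec i j hx1).2.1 (hNspec i k hy1).2.1
    have hfeasC : ∀ i j k, x i j = 1 → y i k = 1 → 0 < P.Esaved i j (b i j) (p i j) →
        P.FeasComb φ i j (M i j) k (N i k) := by
      intro i j k hx1 hy1 hE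
      obtain ⟨hT0, hPle, hEle⟩ := hkey i j k hx1 hy1
      refine ⟨?_, (hMspec i j hx1).1, (hNspec i k hy1).1, hT0, ?_, lt_of_lt_of_le hE hEle⟩
      · by_contra h
        rw [hacc i j h] at hx1
        exact absurd hx1 (by norm_num)
      · refine le_trans hPle ?_
        have h1 := hppm i j
        exact_mod_cast h1
    -- the fundamental inner-sum computation
    have hinner : ∀ i j k (w : ℕ → ℕ → ℝ),
        (∑ m ∈ Finset.range (P.piJ φ j + 1), ∑ n ∈ Finset.range (P.lamK φ k + 1),
          z i j m k n * w m n)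
        = if (x i j = 1 ∧ y i k = 1 ∧ 0 < P.Esaved i j (b i j) (p i j))
          then cφ * w (M i j) (N i k) else 0 := by
      intro i j k w
      by_cases hg : x i j = 1 ∧ y i k = 1 ∧ 0 < P.Esaved i j (b i j) (p i j)
      · rw [if_pos hg]
        have hMm : M i j ∈ Finset.range (P.piJ φ j + 1) :=
          Finset.mem_range.2 (Nat.lt_succ_of_le (hMspec i j hg.1).1)
        have hNm : N i k ∈ Finset.range (P.lamK φ k + 1) :=
          Finset.mem_range.2 (Nat.lt_succ_of_le (hNspec i k hg.2.1).1)
        have hoff1 : ∀ m' ∈ Finset.range (P.piJ φ j + 1), m' ≠ M i j →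
            (∑ n ∈ Finset.range (P.lamK φ k + 1), z i j m' k n * w m' n) = 0 := by
          intro m' _ hne
          refine Finset.sum_eq_zero fun n _ => ?_
          rw [hz, if_neg (fun hc' => hne hc'.2.1), zero_mul]
        rw [Finset.sum_eq_single_of_mem (M i j) hMm hoff1]
        have hoff2 : ∀ n' ∈ Finset.range (P.lamK φ k + 1), n' ≠ N i k →
            z i j (M i j) k n' * w (M i j) n' = 0 := by
          intro n' _ hne
          rw [hz, if_neg (fun hc' => hne hc'.2.2), zero_mul]
        rw [Finset.sum_eq_single_of_mem (N i k) hNm hoff2]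
        rw [hz, if_pos ⟨hg, rfl, rfl⟩]
      · rw [if_neg hg]
        refine Finset.sum_eq_zero fun m _ => Finset.sum_eq_zero fun n _ => ?_
        rw [hz, if_neg (fun hc' => hg hc'.1), zero_mul]
    -- z is RDP-feasible
    have hzfeas : P.RDPFeasible φ z := by
      refine ⟨?_, ?_, ?_, ?_, ?_⟩
      · intro i j m k n
        rw [hz]
        split_ifs
        · exact le_of_lt hcφ0
        · exact le_rfl
      · intro i j m k n hnf
        rw [hz, if_neg]
        rintro ⟨⟨hx1, hy1, hE⟩, rfl, rfl⟩
        exact hnf (hfeasC i j k hx1 hy1 hE)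
      · -- per-task
        intro i
        have hxsR : (∑ j, (x i j : ℝ)) ≤ 1 := by exact_mod_cast hxsum i
        have hysR : (∑ k, (y i k : ℝ)) ≤ 1 := by exact_mod_cast hysum i
        have hxnn : 0 ≤ ∑ j, (x i j : ℝ) :=
          Finset.sum_nonneg fun j _ => (hxR01 i j).1
        have hynn : 0 ≤ ∑ k, (y i k : ℝ) :=
          Finset.sum_nonneg fun k _ => (hyR01 i k).1
        calc (∑ j, ∑ m ∈ Finset.range (P.piJ φ j + 1), ∑ k,
                ∑ n ∈ Finset.range (P.lamK φ k + 1), z i j m k n)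
            = ∑ j, ∑ k, (if (x i j = 1 ∧ y i k = 1 ∧ 0 < P.Esaved i j (b i j) (p i j))
                then cφ else 0) := by
              refine Finset.sum_congr rfl fun j _ => ?_
              rw [Finset.sum_comm]
              refine Finset.sum_congr rfl fun k _ => ?_
              have := hinner i j k (fun _ _ => (1:ℝ))
              simpa using this
          _ ≤ ∑ j, ∑ k, cφ * ((x i j : ℝ) * (y i k : ℝ)) := by
              refine Finset.sum_le_sum fun j _ => Finset.sum_le_sum fun k _ => ?_
              by_cases hg : x i j = 1 ∧ y i k = 1 ∧ 0 < P.Esaved i j (b i j) (p i j)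
              · rw [if_pos hg, hg.1, hg.2.1]; simp
              · rw [if_neg hg]
                exact mul_nonneg (le_of_lt hcφ0)
                  (mul_nonneg (hxR01 i j).1 (hyR01 i k).1)
          _ = cφ * ((∑ j, (x i j : ℝ)) * (∑ k, (y i k : ℝ))) := by
              rw [Finset.sum_mul_sum, Finset.mul_sum]
              refine Finset.sum_congr rfl fun j _ => ?_
              rw [Finset.mul_sum]
          _ ≤ 1 := by nlinarith [mul_nonneg hxnn hynn]
      · -- AP capacity
        intro j
        calc (∑ i, ∑ m ∈ Finset.range (P.piJ φ j + 1), ∑ k,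
                ∑ n ∈ Finset.range (P.lamK φ k + 1), z i j m k n * (P.Blev φ j m : ℝ))
            = ∑ i, ∑ k, (if (x i j = 1 ∧ y i k = 1 ∧ 0 < P.Esaved i j (b i j) (p i j))
                then cφ * (P.Blev φ j (M i j) : ℝ) else 0) := by
              refine Finset.sum_congr rfl fun i _ => ?_
              rw [Finset.sum_comm]
              exact Finset.sum_congr rfl fun k _ =>
                hinner i j k (fun m _ => (P.Blev φ j m : ℝ))
          _ ≤ ∑ i, ∑ k, (1 - P.alpha) * (b i j : ℝ) * (y i k : ℝ) := by
              refine Finset.sum_le_sum fun i _ => Finset.sum_le_sum fun k _ => ?_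
              by_cases hg : x i j = 1 ∧ y i k = 1 ∧ 0 < P.Esaved i j (b i j) (p i j)
              · rw [if_pos hg, hg.2.1]
                have h3 := (hMspec i j hg.1).2.2
                have hcφφ : cφ * φ = 1 - P.alpha := div_mul_cancel₀ _ (ne_of_gt hφ0)
                have h4 := mul_le_mul_of_nonneg_left h3 (le_of_lt hcφ0)
                have h5 : cφ * (φ * (b i j : ℝ)) = (1 - P.alpha) * (b i j : ℝ) := by
                  rw [← mul_assoc, hcφφ]
                push_cast
                linarith
              · rw [if_neg hg]
                have hbnn' : (0:ℝ) ≤ (b i j : ℝ) := by exact_mod_cast hbnn i j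
                exact mul_nonneg (mul_nonneg (by linarith) hbnn') (hyR01 i k).1
          _ ≤ ∑ i, (1 - P.alpha) * (b i j : ℝ) := by
              refine Finset.sum_le_sum fun i _ => ?_
              rw [← Finset.mul_sum]
              have hysR : (∑ k, (y i k : ℝ)) ≤ 1 := by exact_mod_cast hysum i
              have hbnn' : (0:ℝ) ≤ (b i j : ℝ) := by exact_mod_cast hbnn i j
              exact mul_le_of_le_one_right (mul_nonneg (by linarith) hbnn') hysR
          _ ≤ (1 - P.alpha) * (P.bcap j : ℝ) := by
              rw [← Finset.mul_sum]
              have hsum : (∑ i, (b i j : ℝ)) ≤ (P.bcap j : ℝ) := by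
                exact_mod_cast hbcapS j
              exact mul_le_mul_of_nonneg_left hsum (by linarith)
      · -- server capacity
        intro k
        calc (∑ i, ∑ j, ∑ m ∈ Finset.range (P.piJ φ j + 1),
                ∑ n ∈ Finset.range (P.lamK φ k + 1), z i j m k n * (P.Clev φ k n : ℝ))
            = ∑ i, ∑ j, (if (x i j = 1 ∧ y i k = 1 ∧ 0 < P.Esaved i j (b i j) (p i j))
                then cφ * (P.Clev φ k (N i k) : ℝ) else 0) := by
              refine Finset.sum_congr rfl fun i _ => Finset.sum_congr rfl fun j _ =>
                hinner i j k (fun _ n => (P.Clev φ k n : ℝ))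
          _ ≤ ∑ i, ∑ j, (1 - P.alpha) * (c i k : ℝ) * (x i j : ℝ) := by
              refine Finset.sum_le_sum fun i _ => Finset.sum_le_sum fun j _ => ?_
              by_cases hg : x i j = 1 ∧ y i k = 1 ∧ 0 < P.Esaved i j (b i j) (p i j)
              · rw [if_pos hg, hg.1]
                have h3 := (hNspec i k hg.2.1).2.2
                have hcφφ : cφ * φ = 1 - P.alpha := div_mul_cancel₀ _ (ne_of_gt hφ0)
                have h4 := mul_le_mul_of_nonneg_left h3 (le_of_lt hcφ0)
                have h5 : cφ * (φ * (c i k : ℝ)) = (1 - P.alpha) * (c i k : ℝ) := by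
                  rw [← mul_assoc, hcφφ]
                push_cast
                linarith
              · rw [if_neg hg]
                have hcnn' : (0:ℝ) ≤ (c i k : ℝ) := by exact_mod_cast hcnn i k
                exact mul_nonneg (mul_nonneg (by linarith) hcnn') (hxR01 i j).1
          _ ≤ ∑ i, (1 - P.alpha) * (c i k : ℝ) := by
              refine Finset.sum_le_sum fun i _ => ?_
              rw [← Finset.mul_sum]
              have hxsR : (∑ j, (x i j : ℝ)) ≤ 1 := by exact_mod_cast hxsum i
              have hcnn' : (0:ℝ) ≤ (c i k : ℝ) := by exact_mod_cast hcnn i k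
              exact mul_le_of_le_one_right (mul_nonneg (by linarith) hcnn') hxsR
          _ ≤ (1 - P.alpha) * (P.ccap k : ℝ) := by
              rw [← Finset.mul_sum]
              have hsum : (∑ i, (c i k : ℝ)) ≤ (P.ccap k : ℝ) := by
                exact_mod_cast hccapS k
              exact mul_le_mul_of_nonneg_left hsum (by linarith)
    -- objective comparison
    have hobj : cφ * P.DTRPObj x y b p ≤ P.RDPObj φ z := by
      unfold MECInstance.DTRPObj MECInstance.RDPObj
      rw [Finset.mul_sum]
      refine Finset.sum_le_sum fun i _ => ?_
      rw [Finset.mul_sum]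
      refine Finset.sum_le_sum fun j _ => ?_
      have hr : (∑ m ∈ Finset.range (P.piJ φ j + 1), ∑ k,
            ∑ n ∈ Finset.range (P.lamK φ k + 1), z i j m k n * P.Ecomb φ i j m k n)
          = ∑ k, (if (x i j = 1 ∧ y i k = 1 ∧ 0 < P.Esaved i j (b i j) (p i j))
              then cφ * P.Ecomb φ i j (M i j) k (N i k) else 0) := by
        rw [Finset.sum_comm]
        exact Finset.sum_congr rfl fun k _ => hinner i j k (fun m n => P.Ecomb φ i j m k n)
      rw [hr, Finset.mul_sum]
      refine Finset.sum_le_sum fun k _ => ?_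
      by_cases hg : x i j = 1 ∧ y i k = 1 ∧ 0 < P.Esaved i j (b i j) (p i j)
      · rw [if_pos hg, hg.1, hg.2.1]
        have hEle := (hkey i j k hg.1 hg.2.1).2.2
        have h4 := mul_le_mul_of_nonneg_left hEle (le_of_lt hcφ0)
        push_cast
        nlinarith
      · rw [if_neg hg]
        rcases hx01 i j with h | h
        · rw [h]; simp
        · rcases hy01 i k with h' | h'
          · rw [h']; simp
          · have hE : P.Esaved i j (b i j) (p i j) ≤ 0 := by
              by_contra hpos
              exact hg ⟨h, h', lt_of_not_ge hpos⟩
            rw [h, h']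
            push_cast
            nlinarith
    exact le_trans hobj (le_csSup hbddR ⟨z, hzfeas, rfl⟩)
  have hfin := mul_le_mul_of_nonneg_left key (le_of_lt hcφ0)
  rw [mul_comm cφ (P.optRDP φ / cφ), div_mul_cancel₀ _ (ne_of_gt hcφ0)] at hfin
  exact hfin
end
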